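/- arXiv:cond-mat/0002244 — 7 statements merged into one kernel-verified Lean document; each statement's English description precedes it below -/
import Mathlib

section
/- There exists a constant C > 0 such that for every integer n ≠ 0 and every real t, |G₁(n,t)| ≤ C·(|t| + |t|³)/n². -/
open Set Filter

/-- Lattice Green function `G₁(n,t) = (2/π) ∫_{-π}^{π} cos(2σn) sin(2t sin σ) sin σ dσ`. -/
noncomputable def G1fun (n : ℤ) (t : ℝ) : ℝ :=
  (2 / Real.pi) * ∫ σ in (-Real.pi)..Real.pi,
    Real.cos (2 * σ * (n : ℝ)) * Real.sin (2 * t * Real.sin σ) * Real.sin σ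

/-- Lattice Green function `G(n,t) = (2/π) ∫_{-π}^{π} cos(2σn) sin(2t sin σ)/sin σ dσ`,
with the integrand extended by its limiting value `2t cos(2σn)` where `sin σ = 0`. -/
noncomputable def Gfun (n : ℤ) (t : ℝ) : ℝ :=
  (2 / Real.pi) * ∫ σ in (-Real.pi)..Real.pi,
    if Real.sin σ = 0 then 2 * t * Real.cos (2 * σ * (n : ℝ))
    else Real.cos (2 * σ * (n : ℝ)) * Real.sin (2 * t * Real.sin σ) / Real.sin σ

/-- Discrete Laplacian `Δf_n = f_{n+1} + f_{n-1} - 2 f_n`. -/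
noncomputable def lap (f : ℤ → ℝ) (n : ℤ) : ℝ := f (n + 1) + f (n - 1) - 2 * f n

/-- The tail sum `Σ_{m ≤ n-1} f_m`. -/
noncomputable def tailSum (f : ℤ → ℝ) (n : ℤ) : ℝ := ∑' m : {m : ℤ // m ≤ n - 1}, f m.1

/-- Convergence of the tail series `Σ_{m ≤ n-1} f_m`. -/
def TailSummable (f : ℤ → ℝ) (n : ℤ) : Prop :=
  Summable (fun m : {m : ℤ // m ≤ n - 1} => f m.1)

/-- The family `α` (with time derivatives taken within `s`) has finite energy norm on `[0,T)`:
`sup_{0≤t<T} [ Σ_n (Σ_{m≤n-1} α̇_m(t))² + Σ_n α_n(t)² ] < ∞`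
(in particular all the series involved converge). -/
def FiniteEnergyOn (α : ℤ → ℝ → ℝ) (s : Set ℝ) (T : ℝ) : Prop :=
  (∀ n : ℤ, ∀ t ∈ Ico (0 : ℝ) T, TailSummable (fun m => derivWithin (α m) s t) n) ∧
  ∃ M : ℝ, ∀ t ∈ Ico (0 : ℝ) T,
    Summable (fun n : ℤ => (tailSum (fun m => derivWithin (α m) s t) n) ^ 2) ∧
    Summable (fun n : ℤ => (α n t) ^ 2) ∧
    (∑' n : ℤ, (tailSum (fun m => derivWithin (α m) s t) n) ^ 2)
      + (∑' n : ℤ, (α n t) ^ 2) ≤ M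

/-- `α` solves the FPU lattice equation `α̈_n = Δα_n + χ Δ(α_n^p)` on `s`. -/
def SolvesFPU (p : ℕ) (χ : ℝ) (α : ℤ → ℝ → ℝ) (s : Set ℝ) : Prop :=
  ∀ n : ℤ, ∀ t ∈ s,
    derivWithin (derivWithin (α n) s) s t
      = lap (fun m => α m t) n + χ * lap (fun m => (α m t) ^ p) n

/-- `α` solves the sine-Gordon lattice equation `α̈_n = Δα_n + χ Δ(sin α_n)` on `s`. -/
def SolvesSG (χ : ℝ) (α : ℤ → ℝ → ℝ) (s : Set ℝ) : Prop :=
  ∀ n : ℤ, ∀ t ∈ s,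
    derivWithin (derivWithin (α n) s) s t
      = lap (fun m => α m t) n + χ * lap (fun m => Real.sin (α m t)) n

/-- `u` solves the on-site lattice equation `ü_n = Δu_n - χ u_n^p` on `s`. -/
def SolvesOnSite (p : ℕ) (χ : ℝ) (u : ℤ → ℝ → ℝ) (s : Set ℝ) : Prop :=
  ∀ n : ℤ, ∀ t ∈ s,
    derivWithin (derivWithin (u n) s) s t = lap (fun m => u m t) n - χ * (u n t) ^ p

/-- On-site energy norm finiteness: `sup_{0≤t<T} Σ_n [u̇_n(t)² + u_n(t)²] < ∞`. -/
def OnSiteFiniteEnergy (u : ℤ → ℝ → ℝ) (s : Set ℝ) (T : ℝ) : Prop :=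
  ∃ M : ℝ, ∀ t ∈ Ico (0 : ℝ) T,
    Summable (fun n : ℤ => (derivWithin (u n) s t) ^ 2 + (u n t) ^ 2) ∧
    (∑' n : ℤ, ((derivWithin (u n) s t) ^ 2 + (u n t) ^ 2)) ≤ M

namespace G1aux
noncomputable def f (t σ : ℝ) : ℝ := Real.sin (2*t*Real.sin σ) * Real.sin σ
noncomputable def f1 (t σ : ℝ) : ℝ :=
  Real.cos (2*t*Real.sin σ) * (2*t*Real.cos σ) * Real.sin σ
    + Real.sin (2*t*Real.sin σ) * Real.cos σ
noncomputable def f2 (t σ : ℝ) : ℝ :=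
  ((-Real.sin (2*t*Real.sin σ) * (2*t*Real.cos σ)) * (2*t*Real.cos σ)
      + Real.cos (2*t*Real.sin σ) * (2*t*(-Real.sin σ))) * Real.sin σ
    + Real.cos (2*t*Real.sin σ) * (2*t*Real.cos σ) * Real.cos σ
    + (Real.cos (2*t*Real.sin σ) * (2*t*Real.cos σ) * Real.cos σ
      + Real.sin (2*t*Real.sin σ) * (-Real.sin σ))

lemma hinner (t σ : ℝ) :
    HasDerivAt (fun σ => Real.sin (2*t*Real.sin σ)) (Real.cos (2*t*Real.sin σ) * (2*t*Real.cos σ)) σ := by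
  have h1 : HasDerivAt (fun σ => 2*t*Real.sin σ) (2*t*Real.cos σ) σ :=
    (Real.hasDerivAt_sin σ).const_mul (2*t)
  exact (Real.hasDerivAt_sin _).comp σ h1

lemma hf (t σ : ℝ) : HasDerivAt (f t) (f1 t σ) σ :=
  (hinner t σ).mul (Real.hasDerivAt_sin σ)

lemma hinner2 (t σ : ℝ) :
    HasDerivAt (fun σ => Real.cos (2*t*Real.sin σ) * (2*t*Real.cos σ))
      ((-Real.sin (2*t*Real.sin σ) * (2*t*Real.cos σ)) * (2*t*Real.cos σ)
        + Real.cos (2*t*Real.sin σ) * (2*t*(-Real.sin σ))) σ := by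
  have h1 : HasDerivAt (fun σ => 2*t*Real.sin σ) (2*t*Real.cos σ) σ :=
    (Real.hasDerivAt_sin σ).const_mul (2*t)
  have h2 : HasDerivAt (fun σ => Real.cos (2*t*Real.sin σ))
      (-Real.sin (2*t*Real.sin σ) * (2*t*Real.cos σ)) σ :=
    (Real.hasDerivAt_cos _).comp σ h1
  have h3 : HasDerivAt (fun σ => 2*t*Real.cos σ) (2*t*(-Real.sin σ)) σ :=
    (Real.hasDerivAt_cos σ).const_mul (2*t)
  exact h2.mul h3

lemma hf1 (t σ : ℝ) : HasDerivAt (f1 t) (f2 t σ) σ := by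
  have h := ((hinner2 t σ).mul (Real.hasDerivAt_sin σ)).add
    ((hinner t σ).mul (Real.hasDerivAt_cos σ))
  exact h

lemma mab {a b A B : ℝ} (ha : |a| ≤ A) (hb : |b| ≤ B) : |a*b| ≤ A*B := by
  rw [abs_mul]
  exact mul_le_mul ha hb (abs_nonneg _) ((abs_nonneg a).trans ha)

lemma f2_bound (t σ : ℝ) : |f2 t σ| ≤ 8*|t| + 4*t^2 := by
  have ht2 : |2*t| = 2*|t| := by rw [abs_mul]; norm_num
  unfold f2
  set S := Real.sin (2*t*Real.sin σ) with hSdef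
  set C := Real.cos (2*t*Real.sin σ) with hCdef
  have hS1 : |S| ≤ 1 := Real.abs_sin_le_one _
  have hS2 : |S| ≤ 2*|t| := by
    refine (Real.abs_sin_le_abs).trans ?_
    calc |2*t*Real.sin σ| = |2*t| * |Real.sin σ| := abs_mul _ _
      _ ≤ |2*t| * 1 := by gcongr; exact Real.abs_sin_le_one σ
      _ = 2*|t| := by rw [mul_one, ht2]
  have hC : |C| ≤ 1 := Real.abs_cos_le_one _
  set x := Real.sin σ with hxdef
  set c := Real.cos σ with hcdef
  have hx : |x| ≤ 1 := Real.abs_sin_le_one σ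
  have hc : |c| ≤ 1 := Real.abs_cos_le_one σ
  have htc : |2*t*c| ≤ 2*|t| := by
    calc |2*t*c| = |2*t| * |c| := abs_mul _ _
      _ ≤ |2*t| * 1 := by gcongr
      _ = 2*|t| := by rw [mul_one, ht2]
  have htx : |2*t*(-x)| ≤ 2*|t| := by
    calc |2*t*(-x)| = |2*t| * |x| := by rw [abs_mul, abs_neg]
      _ ≤ |2*t| * 1 := by gcongr
      _ = 2*|t| := by rw [mul_one, ht2]
  have hT1 : |((-S*(2*t*c))*(2*t*c) + C*(2*t*(-x)))*x| ≤ 4*t^2 + 2*|t| := by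
    have h1 : |(-S*(2*t*c))*(2*t*c)| ≤ (1*(2*|t|))*(2*|t|) := by
      refine mab (mab ?_ htc) htc
      rwa [abs_neg]
    have h2 : |C*(2*t*(-x))| ≤ 1*(2*|t|) := mab hC htx
    calc |((-S*(2*t*c))*(2*t*c) + C*(2*t*(-x)))*x|
        ≤ ((1*(2*|t|))*(2*|t|) + 1*(2*|t|)) * 1 :=
          mab ((abs_add_le _ _).trans (add_le_add h1 h2)) hx
      _ = 4*t^2 + 2*|t| := by rw [← sq_abs t]; ring
  have hT2 : |C*(2*t*c)*c| ≤ 2*|t| := by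
    have := mab (mab hC htc) hc
    simpa using this
  have hT3 : |S*(-x)| ≤ 2*|t| := by
    have : |S*(-x)| ≤ (2*|t|)*1 := by
      refine mab hS2 ?_; rwa [abs_neg]
    simpa using this
  calc |((-S*(2*t*c))*(2*t*c) + C*(2*t*(-x)))*x + C*(2*t*c)*c + (C*(2*t*c)*c + S*(-x))|
      ≤ |((-S*(2*t*c))*(2*t*c) + C*(2*t*(-x)))*x + C*(2*t*c)*c| + |C*(2*t*c)*c + S*(-x)| := abs_add_le _ _
    _ ≤ (|((-S*(2*t*c))*(2*t*c) + C*(2*t*(-x)))*x| + |C*(2*t*c)*c|) + (|C*(2*t*c)*c| + |S*(-x)|) :=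
        add_le_add (abs_add_le _ _) (abs_add_le _ _)
    _ ≤ ((4*t^2 + 2*|t|) + 2*|t|) + (2*|t| + 2*|t|) :=
        add_le_add (add_le_add hT1 hT2) (add_le_add hT2 hT3)
    _ = 8*|t| + 4*t^2 := by ring

lemma cont_f1 (t : ℝ) : Continuous (f1 t) := by unfold f1; fun_prop
lemma cont_f2 (t : ℝ) : Continuous (f2 t) := by unfold f2; fun_prop

lemma f_pi (t : ℝ) : f t Real.pi = 0 := by simp [f]
lemma f_npi (t : ℝ) : f t (-Real.pi) = 0 := by simp [f]
lemma f1_pi (t : ℝ) : f1 t Real.pi = 0 := by simp [f1]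
lemma f1_npi (t : ℝ) : f1 t (-Real.pi) = 0 := by simp [f1]

lemma hv (N σ : ℝ) (hN : N ≠ 0) :
    HasDerivAt (fun σ => Real.sin (2*σ*N) / (2*N)) (Real.cos (2*σ*N)) σ := by
  have h1 : HasDerivAt (fun σ : ℝ => 2*σ*N) (2*N) σ := by
    simpa using ((hasDerivAt_id σ).const_mul 2).mul_const N
  have h2 : HasDerivAt (fun σ => Real.sin (2*σ*N)) (Real.cos (2*σ*N) * (2*N)) σ :=
    (Real.hasDerivAt_sin _).comp σ h1
  have := h2.div_const (2*N)
  exact this.congr_deriv (mul_div_cancel_right₀ _ (mul_ne_zero two_ne_zero hN))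

lemma hw (N σ : ℝ) (hN : N ≠ 0) :
    HasDerivAt (fun σ => -Real.cos (2*σ*N) / (4*N^2)) (Real.sin (2*σ*N) / (2*N)) σ := by
  have h1 : HasDerivAt (fun σ : ℝ => 2*σ*N) (2*N) σ := by
    simpa using ((hasDerivAt_id σ).const_mul 2).mul_const N
  have h2 : HasDerivAt (fun σ => Real.cos (2*σ*N)) (-Real.sin (2*σ*N) * (2*N)) σ :=
    (Real.hasDerivAt_cos _).comp σ h1
  have := (h2.neg).div_const (4*N^2)
  refine this.congr_deriv ?_
  rw [div_eq_div_iff (mul_ne_zero four_ne_zero (pow_ne_zero 2 hN)) (mul_ne_zero two_ne_zero hN)]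
  ring

lemma key (t : ℝ) (N : ℝ) (hN : N ≠ 0) :
    (∫ σ in (-Real.pi)..Real.pi, Real.cos (2*σ*N) * Real.sin (2*t*Real.sin σ) * Real.sin σ)
      = ∫ σ in (-Real.pi)..Real.pi, f2 t σ * (-Real.cos (2*σ*N) / (4*N^2)) := by
  have hEq : (∫ σ in (-Real.pi)..Real.pi, Real.cos (2*σ*N) * Real.sin (2*t*Real.sin σ) * Real.sin σ)
      = ∫ σ in (-Real.pi)..Real.pi, f t σ * Real.cos (2*σ*N) := by
    apply intervalIntegral.integral_congr
    intro σ _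
    simp only [f]; ring
  have e1 := intervalIntegral.integral_mul_deriv_eq_deriv_mul
    (a := -Real.pi) (b := Real.pi)
    (u := f t) (u' := f1 t) (v := fun σ => Real.sin (2*σ*N) / (2*N))
    (v' := fun σ => Real.cos (2*σ*N))
    (fun σ _ => hf t σ) (fun σ _ => hv N σ hN)
    ((cont_f1 t).intervalIntegrable _ _)
    ((Real.continuous_cos.comp (by fun_prop)).intervalIntegrable _ _)
  have e2 := intervalIntegral.integral_mul_deriv_eq_deriv_mul
    (a := -Real.pi) (b := Real.pi)
    (u := f1 t) (u' := f2 t) (v := fun σ => -Real.cos (2*σ*N) / (4*N^2))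
    (v' := fun σ => Real.sin (2*σ*N) / (2*N))
    (fun σ _ => hf1 t σ) (fun σ _ => hw N σ hN)
    ((cont_f2 t).intervalIntegrable _ _)
    (((Real.continuous_sin.comp (by fun_prop)).div_const _).intervalIntegrable _ _)
  simp only [f_pi, f_npi, f1_pi, f1_npi, zero_mul, sub_zero, zero_sub] at e1 e2
  rw [hEq, e1, e2, neg_neg]

end G1aux

open G1aux

/-- There is `C > 0` with `|G₁(n,t)| ≤ C (|t|+|t|³)/n²` for all `n ≠ 0`, `t ∈ ℝ`. -/
theorem green_G1_decay : ∃ C : ℝ, 0 < C ∧ ∀ n : ℤ, n ≠ 0 → ∀ t : ℝ,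
    |G1fun n t| ≤ C * (|t| + |t| ^ 3) / (n : ℝ) ^ 2 := by
  refine ⟨10, by norm_num, fun n hn t => ?_⟩
  have hN : (n : ℝ) ≠ 0 := Int.cast_ne_zero.mpr hn
  have hN2 : (0:ℝ) < (n:ℝ)^2 := by positivity
  have hpi : (0:ℝ) < Real.pi := Real.pi_pos
  have hb : ∀ σ ∈ Set.uIoc (-Real.pi) Real.pi,
      ‖f2 t σ * (-Real.cos (2*σ*(n:ℝ)) / (4*(n:ℝ)^2))‖ ≤ (8*|t| + 4*t^2) / (4*(n:ℝ)^2) := by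
    intro σ _
    rw [Real.norm_eq_abs, abs_mul, abs_div, abs_neg,
      abs_of_pos (show (0:ℝ) < 4*(n:ℝ)^2 by positivity)]
    have h1 := f2_bound t σ
    have h2 : |Real.cos (2*σ*(n:ℝ))| / (4*(n:ℝ)^2) ≤ 1 / (4*(n:ℝ)^2) := by
      gcongr
      exact Real.abs_cos_le_one _
    calc |f2 t σ| * (|Real.cos (2*σ*(n:ℝ))| / (4*(n:ℝ)^2))
        ≤ (8*|t| + 4*t^2) * (1 / (4*(n:ℝ)^2)) :=
          mul_le_mul h1 h2 (by positivity) (by positivity)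
      _ = (8*|t| + 4*t^2) / (4*(n:ℝ)^2) := by ring
  have hbound := intervalIntegral.norm_integral_le_of_norm_le_const hb
  have habs : |∫ σ in (-Real.pi)..Real.pi, f2 t σ * (-Real.cos (2*σ*(n:ℝ)) / (4*(n:ℝ)^2))|
      ≤ (8*|t| + 4*t^2) / (4*(n:ℝ)^2) * (2*Real.pi) := by
    have : |Real.pi - -Real.pi| = 2*Real.pi := by
      rw [abs_of_pos (by linarith)]; ring
    rw [← Real.norm_eq_abs]
    calc ‖_‖ ≤ _ := hbound
      _ = (8*|t| + 4*t^2) / (4*(n:ℝ)^2) * (2*Real.pi) := by rw [this]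
  have hG : |G1fun n t| = (2/Real.pi) *
      |∫ σ in (-Real.pi)..Real.pi, f2 t σ * (-Real.cos (2*σ*(n:ℝ)) / (4*(n:ℝ)^2))| := by
    rw [G1fun, abs_mul, abs_of_pos (by positivity), key t (n:ℝ) hN]
  rw [hG]
  calc (2/Real.pi) * |∫ σ in (-Real.pi)..Real.pi, f2 t σ * (-Real.cos (2*σ*(n:ℝ)) / (4*(n:ℝ)^2))|
      ≤ (2/Real.pi) * ((8*|t| + 4*t^2) / (4*(n:ℝ)^2) * (2*Real.pi)) := by
        gcongr
    _ = (8*|t| + 4*t^2) / (n:ℝ)^2 := by field_simp; ring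
    _ ≤ 10 * (|t| + |t|^3) / (n:ℝ)^2 := by
        have h1 : t^2 = |t|^2 := (sq_abs t).symm
        have key2 : 8*|t| + 4*t^2 ≤ 10*(|t| + |t|^3) := by
          rw [h1]
          nlinarith [mul_nonneg (abs_nonneg t) (sq_nonneg (1-|t|)),
            pow_nonneg (abs_nonneg t) 3]
        gcongr
end

section
/- There exists a constant C > 0 such that for every integer n ≠ 0 and every real t, the time derivative of the lattice Green function satisfies |∂ₜG(n,t)| ≤ C·t²/n². -/
open Set Filter

section GreenAux
open MeasureTheory intervalIntegral Metric


lemma Gfun_hasDerivAt (n : ℤ) (t₀ : ℝ) :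
    HasDerivAt (Gfun n)
      ((2 / Real.pi) * ∫ σ in (-Real.pi)..Real.pi,
        2 * (Real.cos (2 * σ * (n : ℝ)) * Real.cos (2 * t₀ * Real.sin σ))) t₀ := by
  set F : ℝ → ℝ → ℝ := fun t σ =>
    if Real.sin σ = 0 then 2 * t * Real.cos (2 * σ * (n : ℝ))
    else Real.cos (2 * σ * (n : ℝ)) * Real.sin (2 * t * Real.sin σ) / Real.sin σ with hFdef
  set F' : ℝ → ℝ → ℝ := fun t σ =>
    2 * (Real.cos (2 * σ * (n : ℝ)) * Real.cos (2 * t * Real.sin σ)) with hF'def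
  have hmeas : ∀ x : ℝ,
      AEStronglyMeasurable (F x) (volume.restrict (Set.uIoc (-Real.pi) Real.pi)) := by
    intro x
    refine (Measurable.ite ?_ (by fun_prop) ?_).aestronglyMeasurable
    · exact (isClosed_singleton.preimage Real.continuous_sin).measurableSet
    · exact ((Real.continuous_cos.comp (by fun_prop)).mul
        (Real.continuous_sin.comp (by fun_prop))).measurable.div Real.measurable_sin
  have hbF : ∀ x σ : ℝ, |F x σ| ≤ 2 * |x| := by
    intro x σ
    by_cases h : Real.sin σ = 0
    · simp only [hFdef, if_pos h]
      rw [abs_mul, abs_mul, abs_two]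
      have h1 := Real.abs_cos_le_one (2 * σ * (n : ℝ))
      nlinarith [abs_nonneg x, abs_nonneg (Real.cos (2 * σ * (n : ℝ)))]
    · simp only [hFdef, if_neg h]
      rw [abs_div, abs_mul]
      have hs : 0 < |Real.sin σ| := abs_pos.2 h
      have h1 := Real.abs_cos_le_one (2 * σ * (n : ℝ))
      have h2 : |Real.sin (2 * x * Real.sin σ)| ≤ 2 * |x| * |Real.sin σ| := by
        calc |Real.sin (2 * x * Real.sin σ)| ≤ |2 * x * Real.sin σ| := Real.abs_sin_le_abs
          _ = 2 * |x| * |Real.sin σ| := by rw [abs_mul, abs_mul]; norm_num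
      rw [div_le_iff₀ hs]
      nlinarith [abs_nonneg (Real.sin (2 * x * Real.sin σ)), abs_nonneg x]
  have hF_int : IntervalIntegrable (F t₀) volume (-Real.pi) Real.pi := by
    refine (_root_.intervalIntegrable_const (c := 2 * |t₀|)).mono_fun' (hmeas t₀) ?_
    filter_upwards with σ using hbF t₀ σ
  have hF'_meas : AEStronglyMeasurable (F' t₀) (volume.restrict (Set.uIoc (-Real.pi) Real.pi)) :=
    (by fun_prop : Continuous (F' t₀)).aestronglyMeasurable
  have h_bound : ∀ᵐ σ ∂(volume : Measure ℝ), σ ∈ Set.uIoc (-Real.pi) Real.pi →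
      ∀ x ∈ ball t₀ 1, ‖F' x σ‖ ≤ (2 : ℝ) := by
    filter_upwards with σ _ x _
    simp only [hF'def, Real.norm_eq_abs, abs_mul, abs_two]
    have h1 := Real.abs_cos_le_one (2 * σ * (n : ℝ))
    have h2 := Real.abs_cos_le_one (2 * x * Real.sin σ)
    nlinarith [abs_nonneg (Real.cos (2 * σ * (n : ℝ))), abs_nonneg (Real.cos (2 * x * Real.sin σ))]
  have h_diff : ∀ᵐ σ ∂(volume : Measure ℝ), σ ∈ Set.uIoc (-Real.pi) Real.pi →
      ∀ x ∈ ball t₀ 1, HasDerivAt (fun x => F x σ) (F' x σ) x := by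
    filter_upwards with σ _ x _
    by_cases h : Real.sin σ = 0
    · simp only [hFdef, hF'def, if_pos h, h, mul_zero, Real.cos_zero, mul_one]
      simpa using ((hasDerivAt_id x).const_mul 2).mul_const (Real.cos (2 * σ * (n : ℝ)))
    · simp only [hFdef, hF'def, if_neg h]
      have h1 : HasDerivAt (fun x : ℝ => 2 * x * Real.sin σ) (2 * Real.sin σ) x := by
        simpa using ((hasDerivAt_id x).const_mul 2).mul_const (Real.sin σ)
      have h2 := (h1.sin.const_mul (Real.cos (2 * σ * (n : ℝ)))).div_const (Real.sin σ)
      refine h2.congr_deriv ?_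
      field_simp
  have key := (intervalIntegral.hasDerivAt_integral_of_dominated_loc_of_deriv_le
    (F := F) (F' := F') (a := -Real.pi) (b := Real.pi) (bound := fun _ => (2:ℝ))
    (ball_mem_nhds t₀ one_pos) (Eventually.of_forall hmeas) hF_int hF'_meas h_bound
    _root_.intervalIntegrable_const h_diff).2
  have hG : Gfun n = fun t => (2 / Real.pi) * ∫ σ in (-Real.pi)..Real.pi, F t σ := rfl
  rw [hG]
  exact key.const_mul _

lemma green_integral_bound (n : ℤ) (hn : n ≠ 0) (t : ℝ) :
    |∫ σ in (-Real.pi)..Real.pi, Real.cos (2 * σ * (n : ℝ)) * Real.cos (2 * t * Real.sin σ)|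
      ≤ 4 * Real.pi * t ^ 2 / (n : ℝ) ^ 2 := by
  have hn0 : ((n : ℝ)) ≠ 0 := Int.cast_ne_zero.2 hn
  have hπ := Real.pi_pos
  set u : ℝ → ℝ := fun σ => Real.sin (2 * σ * (n : ℝ)) / (2 * (n : ℝ)) with hu_def
  set v : ℝ → ℝ := fun σ => Real.cos (2 * t * Real.sin σ) with hv_def
  set v' : ℝ → ℝ := fun σ =>
    -Real.sin (2 * t * Real.sin σ) * (2 * t * Real.cos σ) with hv'_def
  set w : ℝ → ℝ := fun σ => -(Real.cos (2 * σ * (n : ℝ)) / (2 * (n : ℝ)) ^ 2) with hw_def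
  set v'' : ℝ → ℝ := fun σ =>
    -(Real.cos (2 * t * Real.sin σ) * (2 * t * Real.cos σ)) * (2 * t * Real.cos σ)
      + -Real.sin (2 * t * Real.sin σ) * (2 * t * -Real.sin σ) with hv''_def
  have hlin : ∀ σ : ℝ, HasDerivAt (fun σ : ℝ => 2 * σ * (n : ℝ)) (2 * (n : ℝ)) σ := by
    intro σ
    simpa using ((hasDerivAt_id σ).const_mul 2).mul_const ((n : ℝ))
  have hu : ∀ σ : ℝ, HasDerivAt u (Real.cos (2 * σ * (n : ℝ))) σ := by
    intro σ
    have := ((hlin σ).sin).div_const (2 * (n : ℝ))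
    refine this.congr_deriv ?_
    field_simp
  have hv : ∀ σ : ℝ, HasDerivAt v (v' σ) σ := by
    intro σ
    exact ((Real.hasDerivAt_sin σ).const_mul (2 * t)).cos
  have hw : ∀ σ : ℝ, HasDerivAt w (u σ) σ := by
    intro σ
    have := (((hlin σ).cos).div_const ((2 * (n : ℝ)) ^ 2)).neg
    refine this.congr_deriv ?_
    show -(-Real.sin (2 * σ * (n : ℝ)) * (2 * (n : ℝ)) / (2 * (n : ℝ)) ^ 2)
      = Real.sin (2 * σ * (n : ℝ)) / (2 * (n : ℝ))
    have h2n : (2 : ℝ) * (n : ℝ) ≠ 0 := mul_ne_zero two_ne_zero hn0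
    rw [sq]
    field_simp
  have hv'' : ∀ σ : ℝ, HasDerivAt v' (v'' σ) σ := by
    intro σ
    exact (((Real.hasDerivAt_sin σ).const_mul (2 * t)).sin.neg).mul
      ((Real.hasDerivAt_cos σ).const_mul (2 * t))
  have hcont_u : Continuous u := by fun_prop
  have hcont_v' : Continuous v' := by fun_prop
  have hcont_v'' : Continuous v'' := by fun_prop
  have hcont_c : Continuous (fun σ : ℝ => Real.cos (2 * σ * (n : ℝ))) := by fun_prop
  have ibp1 := intervalIntegral.integral_mul_deriv_eq_deriv_mul
    (u := v) (v := u) (u' := v') (v' := fun σ => Real.cos (2 * σ * (n : ℝ)))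
    (a := -Real.pi) (b := Real.pi)
    (fun σ _ => hv σ) (fun σ _ => hu σ)
    (hcont_v'.intervalIntegrable _ _) (hcont_c.intervalIntegrable _ _)
  have ibp2 := intervalIntegral.integral_mul_deriv_eq_deriv_mul
    (u := v') (v := w) (u' := v'') (v' := u)
    (a := -Real.pi) (b := Real.pi)
    (fun σ _ => hv'' σ) (fun σ _ => hw σ)
    (hcont_v''.intervalIntegrable _ _) (hcont_u.intervalIntegrable _ _)
  have hupi : u Real.pi = 0 := by
    have : (2 : ℝ) * Real.pi * (n : ℝ) = ((2 * n : ℤ) : ℝ) * Real.pi := by push_cast; ring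
    simp only [hu_def, this, Real.sin_int_mul_pi, zero_div]
  have hunegpi : u (-Real.pi) = 0 := by
    have : (2 : ℝ) * -Real.pi * (n : ℝ) = ((-(2 * n) : ℤ) : ℝ) * Real.pi := by push_cast; ring
    simp only [hu_def, this, Real.sin_int_mul_pi, zero_div]
  have hv'pi : v' Real.pi = 0 := by simp [hv'_def, Real.sin_pi]
  have hv'negpi : v' (-Real.pi) = 0 := by simp [hv'_def, Real.sin_pi]
  have hmain : (∫ σ in (-Real.pi)..Real.pi,
      Real.cos (2 * σ * (n : ℝ)) * Real.cos (2 * t * Real.sin σ))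
      = ∫ σ in (-Real.pi)..Real.pi, v'' σ * w σ := by
    have hswap : (∫ σ in (-Real.pi)..Real.pi,
        Real.cos (2 * σ * (n : ℝ)) * Real.cos (2 * t * Real.sin σ))
        = ∫ σ in (-Real.pi)..Real.pi, v σ * Real.cos (2 * σ * (n : ℝ)) :=
      intervalIntegral.integral_congr (fun σ _ => mul_comm _ _)
    rw [hswap, ibp1, hupi, hunegpi, ibp2, hv'pi, hv'negpi]
    ring
  rw [hmain]
  have hbound : ∀ σ ∈ Set.uIoc (-Real.pi) Real.pi,
      ‖v'' σ * w σ‖ ≤ 2 * t ^ 2 / (n : ℝ) ^ 2 := by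
    intro σ _
    have hA : |2 * t * Real.cos σ| ≤ 2 * |t| := by
      rw [abs_mul, abs_mul, abs_two]
      have := Real.abs_cos_le_one σ
      nlinarith [abs_nonneg t, abs_nonneg (Real.cos σ)]
    have hB : |2 * t * -Real.sin σ| ≤ 2 * |t| := by
      rw [abs_mul, abs_mul, abs_neg, abs_two]
      have := Real.abs_sin_le_one σ
      nlinarith [abs_nonneg t, abs_nonneg (Real.sin σ)]
    have hC : |Real.sin (2 * t * Real.sin σ)| ≤ 2 * |t| := by
      calc |Real.sin (2 * t * Real.sin σ)| ≤ |2 * t * Real.sin σ| := Real.abs_sin_le_abs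
        _ ≤ 2 * |t| := by
          rw [abs_mul, abs_mul, abs_two]
          have := Real.abs_sin_le_one σ
          nlinarith [abs_nonneg t, abs_nonneg (Real.sin σ)]
    have hv''b : |v'' σ| ≤ 8 * t ^ 2 := by
      have h1 : |-(Real.cos (2 * t * Real.sin σ) * (2 * t * Real.cos σ)) * (2 * t * Real.cos σ)|
          ≤ 4 * t ^ 2 := by
        rw [abs_mul, abs_neg, abs_mul]
        nlinarith [mul_le_mul hA hA (abs_nonneg _) (by positivity : (0:ℝ) ≤ 2 * |t|),
          sq_abs t, Real.abs_cos_le_one (2 * t * Real.sin σ),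
          abs_nonneg (Real.cos (2 * t * Real.sin σ)),
          mul_nonneg (abs_nonneg (2 * t * Real.cos σ)) (abs_nonneg (2 * t * Real.cos σ))]
      have h2 : |-Real.sin (2 * t * Real.sin σ) * (2 * t * -Real.sin σ)| ≤ 4 * t ^ 2 := by
        rw [abs_mul, abs_neg]
        nlinarith [mul_le_mul hC hB (abs_nonneg _) (by positivity : (0:ℝ) ≤ 2 * |t|), sq_abs t]
      calc |v'' σ| ≤ |-(Real.cos (2 * t * Real.sin σ) * (2 * t * Real.cos σ)) * (2 * t * Real.cos σ)|
          + |-Real.sin (2 * t * Real.sin σ) * (2 * t * -Real.sin σ)| := abs_add_le _ _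
        _ ≤ 8 * t ^ 2 := by linarith
    have hwb : |w σ| ≤ 1 / (4 * (n : ℝ) ^ 2) := by
      rw [hw_def]
      simp only [abs_neg, abs_div]
      have h1 := Real.abs_cos_le_one (2 * σ * (n : ℝ))
      have h2 : |(2 * (n : ℝ)) ^ 2| = 4 * (n : ℝ) ^ 2 := by
        rw [abs_of_nonneg (by positivity)]; ring
      rw [h2]
      have h3 : (0:ℝ) < 4 * (n : ℝ) ^ 2 := by positivity
      rw [div_le_div_iff₀ h3 h3]
      exact mul_le_mul_of_nonneg_right h1 h3.le
    rw [Real.norm_eq_abs, abs_mul]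
    have hle : |v'' σ| * |w σ| ≤ (8 * t ^ 2) * (1 / (4 * (n : ℝ) ^ 2)) :=
      mul_le_mul hv''b hwb (abs_nonneg _) (by positivity)
    have heq : (8 * t ^ 2) * (1 / (4 * (n : ℝ) ^ 2)) = 2 * t ^ 2 / (n : ℝ) ^ 2 := by
      rw [mul_one_div, div_eq_div_iff (by positivity) (by positivity)]
      ring
    rw [heq] at hle
    exact hle
  calc |∫ σ in (-Real.pi)..Real.pi, v'' σ * w σ|
      ≤ 2 * t ^ 2 / (n : ℝ) ^ 2 * |Real.pi - (-Real.pi)| :=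
        intervalIntegral.norm_integral_le_of_norm_le_const hbound
    _ = 4 * Real.pi * t ^ 2 / (n : ℝ) ^ 2 := by
        rw [abs_of_nonneg (by linarith : (0:ℝ) ≤ Real.pi - (-Real.pi))]
        field_simp
        ring

end GreenAux

/-- There is `C > 0` with `|∂ₜG(n,t)| ≤ C t²/n²` for all `n ≠ 0`, `t ∈ ℝ`. -/
theorem green_G_deriv_decay : ∃ C : ℝ, 0 < C ∧ ∀ n : ℤ, n ≠ 0 → ∀ t : ℝ,
    |deriv (Gfun n) t| ≤ C * t ^ 2 / (n : ℝ) ^ 2 := by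
  refine ⟨16, by norm_num, fun n hn t => ?_⟩
  have hπ := Real.pi_pos
  have hn0 : ((n : ℝ)) ≠ 0 := Int.cast_ne_zero.2 hn
  rw [(Gfun_hasDerivAt n t).deriv, intervalIntegral.integral_const_mul]
  set I := ∫ σ in (-Real.pi)..Real.pi,
    Real.cos (2 * σ * (n : ℝ)) * Real.cos (2 * t * Real.sin σ) with hI
  have hb := green_integral_bound n hn t
  have h1 : |2 / Real.pi * (2 * I)| = 4 / Real.pi * |I| := by
    rw [abs_mul, abs_mul, abs_of_nonneg (by positivity : (0:ℝ) ≤ 2 / Real.pi)]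
    norm_num
    ring
  rw [h1]
  calc 4 / Real.pi * |I| ≤ 4 / Real.pi * (4 * Real.pi * t ^ 2 / (n : ℝ) ^ 2) := by
        gcongr
    _ = 16 * t ^ 2 / (n : ℝ) ^ 2 := by field_simp; ring
end

section
/- For every n ∈ ℤ, the function t ↦ G(n,t) is twice differentiable on ℝ, G(n,0) = 0, and G satisfies the linear lattice wave equation ∂ₜ²G(n,t) = G(n+1,t) + G(n−1,t) − 2G(n,t) for all n ∈ ℤ and t ∈ ℝ. -/
open Set Filter

section GreenAux

open MeasureTheory intervalIntegral

/-- integrand of Gfun -/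
noncomputable def gK (n : ℤ) (t σ : ℝ) : ℝ :=
  if Real.sin σ = 0 then 2 * t * Real.cos (2 * σ * (n : ℝ))
  else Real.cos (2 * σ * (n : ℝ)) * Real.sin (2 * t * Real.sin σ) / Real.sin σ

noncomputable def gK1 (n : ℤ) (t σ : ℝ) : ℝ :=
  2 * Real.cos (2 * σ * (n : ℝ)) * Real.cos (2 * t * Real.sin σ)

noncomputable def gK2 (n : ℤ) (t σ : ℝ) : ℝ :=
  -4 * (Real.cos (2 * σ * (n : ℝ)) * Real.sin (2 * t * Real.sin σ) * Real.sin σ)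

lemma gK_hasDeriv (n : ℤ) (σ t : ℝ) :
    HasDerivAt (fun t => gK n t σ) (gK1 n t σ) t := by
  by_cases h : Real.sin σ = 0
  · simp only [gK, gK1, h, if_pos, mul_zero, Real.cos_zero, mul_one]
    simpa using ((hasDerivAt_id t).const_mul 2).mul_const (Real.cos (2 * σ * (n : ℝ)))
  · simp only [gK, gK1, h, if_neg, if_false]
    have h1 : HasDerivAt (fun t : ℝ => 2 * t * Real.sin σ) (2 * Real.sin σ) t := by
      simpa using ((hasDerivAt_id t).const_mul 2).mul_const (Real.sin σ)
    have h2 := ((h1.sin.const_mul (Real.cos (2 * σ * (n : ℝ)))).div_const (Real.sin σ))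
    refine h2.congr_deriv ?_
    field_simp

lemma gK1_hasDeriv (n : ℤ) (σ t : ℝ) :
    HasDerivAt (fun t => gK1 n t σ) (gK2 n t σ) t := by
  have h1 : HasDerivAt (fun t : ℝ => 2 * t * Real.sin σ) (2 * Real.sin σ) t := by
    simpa using ((hasDerivAt_id t).const_mul 2).mul_const (Real.sin σ)
  have h2 := h1.cos.const_mul (2 * Real.cos (2 * σ * (n : ℝ)))
  simp only [gK1, gK2]
  refine h2.congr_deriv ?_
  ring

lemma gK_meas (n : ℤ) (t : ℝ) :
    AEStronglyMeasurable (gK n t)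
      (volume.restrict (Set.uIoc (-Real.pi) Real.pi)) := by
  apply Measurable.aestronglyMeasurable
  unfold gK
  exact Measurable.ite (Real.measurable_sin (measurableSet_singleton 0))
    (by fun_prop) (by fun_prop)

lemma gK_bound (n : ℤ) (t σ : ℝ) : ‖gK n t σ‖ ≤ 2 * |t| := by
  unfold gK
  by_cases h : Real.sin σ = 0
  · rw [if_pos h]
    rw [Real.norm_eq_abs, abs_mul, abs_mul]
    calc |2| * |t| * |Real.cos (2 * σ * (n : ℝ))| ≤ |2| * |t| * 1 :=
          mul_le_mul_of_nonneg_left (Real.abs_cos_le_one _) (by positivity)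
      _ = 2 * |t| := by norm_num
  · rw [if_neg h]
    rw [Real.norm_eq_abs, abs_div, abs_mul]
    rw [div_le_iff₀ (abs_pos.mpr h)]
    calc |Real.cos (2 * σ * (n : ℝ))| * |Real.sin (2 * t * Real.sin σ)|
        ≤ 1 * |2 * t * Real.sin σ| :=
          mul_le_mul (Real.abs_cos_le_one _) (Real.abs_sin_le_abs) (abs_nonneg _) zero_le_one
      _ = 2 * |t| * |Real.sin σ| := by rw [one_mul, abs_mul, abs_mul]; norm_num

lemma gK_int (n : ℤ) (t : ℝ) :
    IntervalIntegrable (gK n t) volume (-Real.pi) Real.pi := by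
  apply IntervalIntegrable.mono_fun' (g := fun _ => 2 * |t|)
    intervalIntegrable_const (gK_meas n t)
  filter_upwards with σ using gK_bound n t σ

lemma gK1_int (n : ℤ) (t : ℝ) :
    IntervalIntegrable (gK1 n t) volume (-Real.pi) Real.pi := by
  apply Continuous.intervalIntegrable
  unfold gK1; fun_prop

lemma gK2_int (n : ℤ) (t : ℝ) :
    IntervalIntegrable (gK2 n t) volume (-Real.pi) Real.pi := by
  apply Continuous.intervalIntegrable
  unfold gK2; fun_prop

lemma cos_eq_one_of_sin_eq_zero (m : ℤ) {σ : ℝ} (h : Real.sin σ = 0) :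
    Real.cos (2 * σ * (m : ℝ)) = 1 := by
  obtain ⟨k, hk⟩ := Real.sin_eq_zero_iff.mp h
  rw [← hk]
  have : 2 * ((k : ℝ) * Real.pi) * (m : ℝ) = ((k * m : ℤ) : ℝ) * (2 * Real.pi) := by
    push_cast; ring
  rw [this, Real.cos_int_mul_two_pi]

lemma gK_lap (n : ℤ) (t σ : ℝ) :
    gK (n + 1) t σ + gK (n - 1) t σ - 2 * gK n t σ = gK2 n t σ := by
  unfold gK gK2
  by_cases h : Real.sin σ = 0
  · rw [if_pos h, if_pos h, if_pos h, h,
      cos_eq_one_of_sin_eq_zero (n+1) h, cos_eq_one_of_sin_eq_zero (n-1) h,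
      cos_eq_one_of_sin_eq_zero n h]
    ring
  · rw [if_neg h, if_neg h, if_neg h]
    have e1 : 2 * σ * ((n + 1 : ℤ) : ℝ) = 2 * σ * (n : ℝ) + 2 * σ := by push_cast; ring
    have e2 : 2 * σ * ((n - 1 : ℤ) : ℝ) = 2 * σ * (n : ℝ) - 2 * σ := by push_cast; ring
    rw [e1, e2, Real.cos_add, Real.cos_sub]
    have c2 : Real.cos (2 * σ) = 1 - 2 * Real.sin σ ^ 2 := by
      rw [Real.cos_two_mul, ← Real.sin_sq_add_cos_sq σ]; ring
    have s2 : Real.sin (2 * σ) = 2 * Real.sin σ * Real.cos σ := Real.sin_two_mul σ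
    rw [c2, s2]
    field_simp
    ring

noncomputable def Hfun (n : ℤ) (t : ℝ) : ℝ :=
  (2 / Real.pi) * ∫ σ in (-Real.pi)..Real.pi, gK1 n t σ

lemma G_hasDeriv' (n : ℤ) (t : ℝ) :
    HasDerivAt (fun t => (2 / Real.pi) * ∫ σ in (-Real.pi)..Real.pi, gK n t σ)
      (Hfun n t) t := by
  have key := intervalIntegral.hasDerivAt_integral_of_dominated_loc_of_deriv_le
    (μ := volume) (F := fun t σ => gK n t σ) (F' := fun t σ => gK1 n t σ)
    (bound := fun _ => 2) (a := -Real.pi) (b := Real.pi) (x₀ := t)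
    Filter.univ_mem (.of_forall fun x => gK_meas n x) (gK_int n t)
    (Continuous.aestronglyMeasurable (by unfold gK1; fun_prop))
    ?_ intervalIntegrable_const ?_
  · exact (key.2).const_mul (2 / Real.pi)
  · filter_upwards with σ _ x _
    rw [gK1, Real.norm_eq_abs, abs_mul, abs_mul, abs_two]
    nlinarith [Real.abs_cos_le_one (2 * σ * (n : ℝ)),
      Real.abs_cos_le_one (2 * x * Real.sin σ), abs_nonneg (Real.cos (2 * σ * (n : ℝ))),
      abs_nonneg (Real.cos (2 * x * Real.sin σ))]
  · filter_upwards with σ _ x _ using gK_hasDeriv n σ x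

lemma H_hasDeriv (n : ℤ) (t : ℝ) :
    HasDerivAt (Hfun n) ((2 / Real.pi) * ∫ σ in (-Real.pi)..Real.pi, gK2 n t σ) t := by
  have key := intervalIntegral.hasDerivAt_integral_of_dominated_loc_of_deriv_le
    (μ := volume) (F := fun t σ => gK1 n t σ) (F' := fun t σ => gK2 n t σ)
    (bound := fun _ => 4) (a := -Real.pi) (b := Real.pi) (x₀ := t)
    Filter.univ_mem (.of_forall fun x => Continuous.aestronglyMeasurable (by unfold gK1; fun_prop))
    (gK1_int n t) (Continuous.aestronglyMeasurable (by unfold gK2; fun_prop))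
    ?_ intervalIntegrable_const ?_
  · exact (key.2).const_mul (2 / Real.pi)
  · filter_upwards with σ _ x _
    rw [gK2, Real.norm_eq_abs, abs_mul, abs_mul, abs_mul]
    have h1 := Real.abs_cos_le_one (2 * σ * (n : ℝ))
    have h2 := Real.abs_sin_le_one (2 * x * Real.sin σ)
    have h3 := Real.abs_sin_le_one σ
    have := abs_nonneg (Real.cos (2 * σ * (n : ℝ)))
    have := abs_nonneg (Real.sin (2 * x * Real.sin σ))
    have := abs_nonneg (Real.sin σ)
    rw [show |(-4 : ℝ)| = 4 by norm_num]
    have hcs : |Real.cos (2 * σ * (n : ℝ))| * |Real.sin (2 * x * Real.sin σ)| ≤ 1 :=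
      mul_le_one₀ h1 (abs_nonneg _) h2
    nlinarith
  · filter_upwards with σ _ x _ using gK1_hasDeriv n σ x

end GreenAux

/-- `t ↦ G(n,t)` is twice differentiable, `G(n,0) = 0`, and
`∂ₜ²G(n,t) = G(n+1,t) + G(n-1,t) - 2G(n,t)` for all `n ∈ ℤ`, `t ∈ ℝ`. -/
theorem green_G_solves_wave (n : ℤ) :
    Differentiable ℝ (Gfun n) ∧ Differentiable ℝ (deriv (Gfun n)) ∧
    Gfun n 0 = 0 ∧
    ∀ t : ℝ, deriv (deriv (Gfun n)) t
      = Gfun (n + 1) t + Gfun (n - 1) t - 2 * Gfun n t := by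
  have hG : ∀ t, HasDerivAt (Gfun n) (Hfun n t) t := fun t => G_hasDeriv' n t
  have hderiv : deriv (Gfun n) = Hfun n := funext fun t => (hG t).deriv
  refine ⟨fun t => (hG t).differentiableAt, ?_, ?_, ?_⟩
  · rw [hderiv]; exact fun t => (H_hasDeriv n t).differentiableAt
  · show (2 / Real.pi) * ∫ σ in (-Real.pi)..Real.pi, gK n 0 σ = 0
    have : ∀ σ : ℝ, gK n 0 σ = 0 := by
      intro σ; unfold gK
      by_cases h : Real.sin σ = 0 <;> simp [h]
    simp [this]
  · intro t
    rw [hderiv, (H_hasDeriv n t).deriv]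
    have hint : (∫ σ in (-Real.pi)..Real.pi, gK (n+1) t σ)
        + (∫ σ in (-Real.pi)..Real.pi, gK (n-1) t σ)
        - 2 * ∫ σ in (-Real.pi)..Real.pi, gK n t σ
        = ∫ σ in (-Real.pi)..Real.pi, gK2 n t σ := by
      rw [← intervalIntegral.integral_const_mul,
        ← intervalIntegral.integral_add (gK_int (n+1) t) (gK_int (n-1) t),
        ← intervalIntegral.integral_sub ((gK_int (n+1) t).add (gK_int (n-1) t))
          ((gK_int n t).const_mul 2)]
      apply intervalIntegral.integral_congr
      intro σ _
      exact gK_lap n t σ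
    have key : Gfun (n+1) t + Gfun (n-1) t - 2 * Gfun n t
        = (2 / Real.pi) * ∫ σ in (-Real.pi)..Real.pi, gK2 n t σ := by
      show (2 / Real.pi) * (∫ σ in (-Real.pi)..Real.pi, gK (n+1) t σ)
        + (2 / Real.pi) * (∫ σ in (-Real.pi)..Real.pi, gK (n-1) t σ)
        - 2 * ((2 / Real.pi) * ∫ σ in (-Real.pi)..Real.pi, gK n t σ) = _
      linear_combination (2 / Real.pi) * hint
    rw [key]
end

section
/- For all n ∈ ℤ and t ∈ ℝ, the two lattice Green functions are related by the identity G(n+1,t) + G(n−1,t) − 2G(n,t) = −4·G₁(n,t). -/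
open Set Filter

noncomputable def hfun (t : ℝ) (x : ℝ) : ℝ := if x = 0 then 2*t else Real.sin (2*t*x)/x

lemma hfun_cont (t : ℝ) : Continuous (hfun t) := by
  rw [continuous_iff_continuousAt]
  intro x
  rcases eq_or_ne x 0 with rfl | hx
  · have hd : HasDerivAt (fun x => Real.sin (2*t*x)) (2*t) 0 := by
      have := (Real.hasDerivAt_sin (2*t*0)).comp 0 ((hasDerivAt_id 0).const_mul (2*t))
      simpa [Function.comp_def] using this
    have hs := hasDerivAt_iff_tendsto_slope.mp hd
    have hslope : ∀ y : ℝ, y ≠ 0 → slope (fun x => Real.sin (2*t*x)) 0 y = hfun t y := by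
      intro y hy
      simp [slope, hfun, hy, div_eq_inv_mul]
    have h1 : Filter.Tendsto (hfun t) (nhdsWithin 0 {(0:ℝ)}ᶜ) (nhds (2*t)) := by
      refine hs.congr' ?_
      filter_upwards [self_mem_nhdsWithin] with y hy using hslope y hy
    have : Filter.Tendsto (hfun t) (nhds 0) (nhds (2*t)) := by
      rw [← nhdsNE_sup_pure 0]
      rw [Filter.tendsto_sup]
      refine ⟨h1, ?_⟩
      have := tendsto_pure_nhds (hfun t) 0
      simpa [hfun] using this
    simpa [ContinuousAt, hfun] using this
  · have : ContinuousAt (fun y => Real.sin (2*t*y)/y) x :=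
      ((Real.continuous_sin.comp (continuous_const.mul continuous_id)).continuousAt).div
        continuousAt_id hx
    refine this.congr ?_
    filter_upwards [isOpen_compl_singleton.mem_nhds hx] with y hy
    have hy' : y ≠ 0 := hy
    simp [hfun, hy']

lemma cont_int (m : ℤ) (t : ℝ) : Continuous (fun σ : ℝ =>
    if Real.sin σ = 0 then 2 * t * Real.cos (2 * σ * (m : ℝ))
    else Real.cos (2 * σ * (m : ℝ)) * Real.sin (2 * t * Real.sin σ) / Real.sin σ) := by
  have : (fun σ : ℝ =>
      if Real.sin σ = 0 then 2 * t * Real.cos (2 * σ * (m : ℝ))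
      else Real.cos (2 * σ * (m : ℝ)) * Real.sin (2 * t * Real.sin σ) / Real.sin σ)
      = fun σ => Real.cos (2 * σ * (m : ℝ)) * hfun t (Real.sin σ) := by
    funext σ
    by_cases h : Real.sin σ = 0 <;> simp [hfun, h] <;> ring
  rw [this]
  exact (Real.continuous_cos.comp (by continuity)).mul ((hfun_cont t).comp Real.continuous_sin)

lemma ptwise (n : ℤ) (t σ : ℝ) :
    (if Real.sin σ = 0 then 2 * t * Real.cos (2 * σ * ((n + 1 : ℤ) : ℝ))
      else Real.cos (2 * σ * ((n + 1 : ℤ) : ℝ)) * Real.sin (2 * t * Real.sin σ) / Real.sin σ)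
    + (if Real.sin σ = 0 then 2 * t * Real.cos (2 * σ * ((n - 1 : ℤ) : ℝ))
      else Real.cos (2 * σ * ((n - 1 : ℤ) : ℝ)) * Real.sin (2 * t * Real.sin σ) / Real.sin σ)
    - 2 * (if Real.sin σ = 0 then 2 * t * Real.cos (2 * σ * (n : ℝ))
      else Real.cos (2 * σ * (n : ℝ)) * Real.sin (2 * t * Real.sin σ) / Real.sin σ)
    = -4 * (Real.cos (2 * σ * (n : ℝ)) * Real.sin (2 * t * Real.sin σ) * Real.sin σ) := by
  by_cases h : Real.sin σ = 0
  · obtain ⟨k, hk⟩ := Real.sin_eq_zero_iff.mp h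
    have c : ∀ m : ℤ, Real.cos (2 * σ * (m : ℝ)) = 1 := by
      intro m
      rw [← hk, show 2 * ((k:ℝ) * Real.pi) * (m:ℝ) = ((k*m : ℤ) : ℝ) * (2 * Real.pi) by
        push_cast; ring]
      exact Real.cos_int_mul_two_pi _
    simp only [if_pos h, c, h]
    ring
  · simp only [if_neg h]
    push_cast
    have hc1 : Real.cos (2 * σ * ((n:ℝ) + 1))
        = Real.cos (2*σ*(n:ℝ)) * Real.cos (2*σ) - Real.sin (2*σ*(n:ℝ)) * Real.sin (2*σ) := by
      rw [show 2 * σ * ((n:ℝ) + 1) = 2*σ*(n:ℝ) + 2*σ by ring, Real.cos_add]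
    have hc2 : Real.cos (2 * σ * ((n:ℝ) - 1))
        = Real.cos (2*σ*(n:ℝ)) * Real.cos (2*σ) + Real.sin (2*σ*(n:ℝ)) * Real.sin (2*σ) := by
      rw [show 2 * σ * ((n:ℝ) - 1) = 2*σ*(n:ℝ) - 2*σ by ring, Real.cos_sub]
    have h2 : Real.cos (2*σ) = 1 - 2 * Real.sin σ ^ 2 := by
      rw [Real.cos_two_mul]; nlinarith [Real.sin_sq_add_cos_sq σ]
    rw [hc1, hc2, h2]
    field_simp
    ring

/-- `G(n+1,t) + G(n-1,t) - 2G(n,t) = -4 G₁(n,t)` for all `n ∈ ℤ`, `t ∈ ℝ`. -/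
theorem green_laplacian_identity (n : ℤ) (t : ℝ) :
    Gfun (n + 1) t + Gfun (n - 1) t - 2 * Gfun n t = -4 * G1fun n t := by
  have hi : ∀ m : ℤ, IntervalIntegrable (fun σ : ℝ =>
      if Real.sin σ = 0 then 2 * t * Real.cos (2 * σ * (m : ℝ))
      else Real.cos (2 * σ * (m : ℝ)) * Real.sin (2 * t * Real.sin σ) / Real.sin σ)
      MeasureTheory.volume (-Real.pi) Real.pi :=
    fun m => (cont_int m t).intervalIntegrable _ _
  have key :
      (∫ σ in (-Real.pi)..Real.pi,
        if Real.sin σ = 0 then 2 * t * Real.cos (2 * σ * ((n + 1 : ℤ) : ℝ))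
        else Real.cos (2 * σ * ((n + 1 : ℤ) : ℝ)) * Real.sin (2 * t * Real.sin σ) / Real.sin σ)
      + (∫ σ in (-Real.pi)..Real.pi,
        if Real.sin σ = 0 then 2 * t * Real.cos (2 * σ * ((n - 1 : ℤ) : ℝ))
        else Real.cos (2 * σ * ((n - 1 : ℤ) : ℝ)) * Real.sin (2 * t * Real.sin σ) / Real.sin σ)
      - 2 * (∫ σ in (-Real.pi)..Real.pi,
        if Real.sin σ = 0 then 2 * t * Real.cos (2 * σ * (n : ℝ))
        else Real.cos (2 * σ * (n : ℝ)) * Real.sin (2 * t * Real.sin σ) / Real.sin σ)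
      = -4 * ∫ σ in (-Real.pi)..Real.pi,
          Real.cos (2 * σ * (n : ℝ)) * Real.sin (2 * t * Real.sin σ) * Real.sin σ := by
    rw [← intervalIntegral.integral_const_mul, ← intervalIntegral.integral_const_mul,
      ← intervalIntegral.integral_add (hi (n+1)) (hi (n-1)),
      ← intervalIntegral.integral_sub ((hi (n+1)).add (hi (n-1))) ((hi n).const_mul 2)]
    exact intervalIntegral.integral_congr fun σ _ => ptwise n t σ
  unfold Gfun G1fun
  linear_combination (2 / Real.pi) * key
end

section
/- Let p ≥ 2 be an integer and χ_p > 0. Let (ã_n)_{n∈ℤ} and (b̃_n)_{n∈ℤ} be real sequences such that for every n the series Σ_{m≤n−1} b̃_m converges and Σ_{n∈ℤ} (Σ_{m≤n−1} b̃_m)² + Σ_{n∈ℤ} ã_n² < ∞, and assume moreover that for every n the series Σ_{m≤n} ã_m converges with sup_{n∈ℤ} |Σ_{m≤n} ã_m| < ∞. Let α = (α_n)_{n∈ℤ} be a family of C² real functions on [0,T) with finite energy which solves the FPU equation α̈_n(t) = Δα_n(t) + χ_p·Δ(α_n(t)^p) with α_n(0) = ã_n and α̇_n(0) = b̃_n.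 Then for every n ∈ ℤ and every t ∈ [0,T) the series ũ_n(t) = Σ_{m≤n} α_m(t) converges, and for every T' < T the function (n,t) ↦ ũ_n(t) is bounded on ℤ × [0,T']. -/
open Set Filter

lemma tsum_split_aux (f : ℤ → ℝ) (c N : ℤ) (hN : N ≤ c + 1)
    (h : Summable fun m : {m : ℤ // m ≤ c} => f m.1) :
    (∑' m : {m : ℤ // m ≤ c}, f m.1)
      = (∑' m : {m : ℤ // m ≤ N - 1}, f m.1) + ∑ m ∈ Finset.Icc N c, f m := by
  have hind : Summable ({m : ℤ | m ≤ c}.indicator f) := summable_subtype_iff_indicator.mp h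
  have hkey : ∀ m : ℤ, {m : ℤ | m ≤ c}.indicator f m
      = {m : ℤ | m ≤ N - 1}.indicator f m + (↑(Finset.Icc N c) : Set ℤ).indicator f m := by
    intro m
    simp only [Set.indicator_apply, Finset.coe_Icc, Set.mem_Icc, Set.mem_setOf_eq]
    split_ifs <;> (try ring) <;> omega
  have h1 : Summable ({m : ℤ | m ≤ N - 1}.indicator f) := by
    have he : {m : ℤ | m ≤ N - 1}.indicator f
        = {m : ℤ | m ≤ N - 1}.indicator ({m : ℤ | m ≤ c}.indicator f) := by
      funext m
      simp only [Set.indicator_apply, Set.mem_setOf_eq]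
      split_ifs <;> (try ring) <;> omega
    rw [he]; exact hind.indicator _
  have h2 : Summable ((↑(Finset.Icc N c) : Set ℤ).indicator f) := by
    apply summable_of_ne_finset_zero (s := Finset.Icc N c)
    intro m hm
    simp only [Set.indicator_apply, Finset.coe_Icc, Set.mem_Icc]
    rw [if_neg (by simpa [Finset.mem_Icc] using hm)]
  calc (∑' m : {m : ℤ // m ≤ c}, f m.1) = ∑' m, {m : ℤ | m ≤ c}.indicator f m :=
        tsum_subtype {m : ℤ | m ≤ c} f
    _ = ∑' m, ({m : ℤ | m ≤ N - 1}.indicator f m + (↑(Finset.Icc N c) : Set ℤ).indicator f m) :=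
        tsum_congr hkey
    _ = (∑' m, {m : ℤ | m ≤ N - 1}.indicator f m)
        + ∑' m, (↑(Finset.Icc N c) : Set ℤ).indicator f m := Summable.tsum_add h1 h2
    _ = (∑' m : {m : ℤ // m ≤ N - 1}, f m.1) + ∑ m ∈ Finset.Icc N c, f m := by
        rw [← tsum_subtype]
        congr 1
        rw [tsum_eq_sum (s := Finset.Icc N c)]
        · refine Finset.sum_congr rfl fun m hm => ?_
          simp only [Set.indicator_apply, Finset.coe_Icc, Set.mem_Icc]
          rw [if_pos (by simpa [Finset.mem_Icc] using hm)]
        · intro m hm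
          simp only [Set.indicator_apply, Finset.coe_Icc, Set.mem_Icc]
          rw [if_neg (by simpa [Finset.mem_Icc] using hm)]

lemma ftc_Ico {T : ℝ} (f g : ℝ → ℝ)
    (hfg : ∀ u ∈ Ico (0:ℝ) T, HasDerivWithinAt f (g u) (Ico (0:ℝ) T) u)
    (hf : ContinuousOn f (Ico (0:ℝ) T)) (hg : ContinuousOn g (Ico (0:ℝ) T))
    {t : ℝ} (ht : t ∈ Ico (0:ℝ) T) :
    ∫ u in (0:ℝ)..t, g u = f t - f 0 := by
  have hsub : Icc (0:ℝ) t ⊆ Ico (0:ℝ) T := fun x hx => ⟨hx.1, lt_of_le_of_lt hx.2 ht.2⟩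
  apply intervalIntegral.integral_eq_sub_of_hasDeriv_right_of_le ht.1 (hf.mono hsub)
  · intro x hx
    have hx' : x ∈ Ico (0:ℝ) T := ⟨le_of_lt hx.1, lt_trans hx.2 ht.2⟩
    have hnhds : Ico (0:ℝ) T ∈ nhds x :=
      mem_of_superset (isOpen_Ioo.mem_nhds ⟨hx.1, lt_trans hx.2 ht.2⟩) Ioo_subset_Ico_self
    exact ((hfg x hx').hasDerivAt hnhds).hasDerivWithinAt
  · exact (hg.mono (by rwa [uIcc_of_le ht.1])).intervalIntegrable

lemma tendsto_sum_Icc (f : ℤ → ℝ) (n : ℤ) (h : Summable fun m : {m : ℤ // m ≤ n} => f m.1) :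
    Tendsto (fun N : ℕ => ∑ m ∈ Finset.Icc (n - N) n, f m) atTop
      (nhds (∑' m : {m : ℤ // m ≤ n}, f m.1)) := by
  have hs : HasSum (fun m : {m : ℤ // m ≤ n} => f m.1) (∑' m : {m : ℤ // m ≤ n}, f m.1) :=
    h.hasSum
  have hmono : Monotone (fun N : ℕ => (Finset.Icc (n - N) n).subtype (fun m => m ≤ n)) := by
    intro i j hij
    apply Finset.subtype_mono
    apply Finset.Icc_subset_Icc _ le_rfl
    omega
  have hcov : ∀ x : {m : ℤ // m ≤ n}, ∃ N : ℕ,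
      x ∈ (Finset.Icc (n - N) n).subtype (fun m => m ≤ n) := by
    intro x
    refine ⟨(n - x.1).toNat, ?_⟩
    simp only [Finset.mem_subtype, Finset.mem_Icc]
    constructor
    · omega
    · exact x.2
  have := hs.comp (tendsto_atTop_finset_of_monotone hmono hcov)
  convert this using 2 with N
  show _ = ∑ b ∈ (Finset.Icc (n - (N:ℤ)) n).subtype (fun m => m ≤ n), f b.1
  rw [Finset.sum_subtype_eq_sum_filter]
  apply (Finset.sum_filter_of_ne ?_).symm
  intro m hm _
  exact (Finset.mem_Icc.mp hm).2

lemma sum_affine_exp_bound (c0 c1 x : ℝ) (hc0 : 0 ≤ c0) (hc1 : 0 ≤ c1) (hx : 0 ≤ x) (K : ℕ) :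
    ∑ k ∈ Finset.range K, (c0 + k * c1) * x ^ k / k.factorial
      ≤ c0 * Real.exp x + c1 * (x * Real.exp x) := by
  have h1 : ∑ k ∈ Finset.range K, c0 * x ^ k / k.factorial ≤ c0 * Real.exp x := by
    calc ∑ k ∈ Finset.range K, c0 * x ^ k / k.factorial
        = c0 * ∑ k ∈ Finset.range K, x ^ k / k.factorial := by
          rw [Finset.mul_sum]; congr 1; funext k; ring
      _ ≤ c0 * Real.exp x := by
          apply mul_le_mul_of_nonneg_left (Real.sum_le_exp_of_nonneg hx K) hc0
  have h2 : ∑ k ∈ Finset.range K, (k * c1) * x ^ k / k.factorial ≤ c1 * (x * Real.exp x) := by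
    have key : ∀ K : ℕ, ∑ k ∈ Finset.range K, (k : ℝ) * x ^ k / k.factorial
        ≤ x * Real.exp x := by
      intro K
      cases K with
      | zero => simp; positivity
      | succ n =>
        rw [Finset.sum_range_succ']
        simp only [Nat.cast_zero, Nat.cast_succ, pow_zero]
        have : ∀ j : ℕ, ((j:ℝ)+1) * x ^ (j+1) / (j+1).factorial = x * (x ^ j / j.factorial) := by
          intro j
          rw [Nat.factorial_succ]
          push_cast
          have h0 : (j.factorial : ℝ) ≠ 0 := by positivity
          field_simp
          ring
        calc (∑ j ∈ Finset.range n, ((j:ℝ)+1) * x ^ (j+1) / (j+1).factorial) + 0 * 1 / Nat.factorial 0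
            = x * ∑ j ∈ Finset.range n, x ^ j / j.factorial := by
              simp only [this]; rw [Finset.mul_sum]; simp
          _ ≤ x * Real.exp x :=
              mul_le_mul_of_nonneg_left (Real.sum_le_exp_of_nonneg hx n) hx
    calc ∑ k ∈ Finset.range K, (k * c1) * x ^ k / k.factorial
        = c1 * ∑ k ∈ Finset.range K, (k:ℝ) * x ^ k / k.factorial := by
          rw [Finset.mul_sum]; congr 1; funext k; ring
      _ ≤ c1 * (x * Real.exp x) := mul_le_mul_of_nonneg_left (key K) hc1
  calc ∑ k ∈ Finset.range K, (c0 + k * c1) * x ^ k / k.factorial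
      = (∑ k ∈ Finset.range K, c0 * x ^ k / k.factorial)
        + ∑ k ∈ Finset.range K, (k * c1) * x ^ k / k.factorial := by
        rw [← Finset.sum_add_distrib]; congr 1; funext k; ring
    _ ≤ _ := add_le_add h1 h2

lemma tendsto_rem (w y C : ℝ) (hw : 0 ≤ w) (hy : 0 ≤ y) :
    Tendsto (fun K : ℕ => C * ((w + 2 * K) * y ^ K / K.factorial)) atTop (nhds 0) := by
  have hb : ∀ K : ℕ, |(w + 2 * K) * y ^ K / K.factorial| ≤ (w + 2) * (2*y) ^ K / K.factorial := by
    intro K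
    rw [abs_of_nonneg (by positivity)]
    have hK : w + 2 * K ≤ (w + 2) * 2 ^ K := by
      have h2K : (K : ℝ) ≤ 2 ^ K := le_of_lt (by exact_mod_cast (Nat.lt_two_pow_self (n := K)))
      have h1 : (1:ℝ) ≤ 2 ^ K := one_le_pow₀ (by norm_num)
      nlinarith
    calc (w + 2 * K) * y ^ K / K.factorial ≤ ((w + 2) * 2 ^ K) * y ^ K / K.factorial := by
          gcongr
      _ = (w + 2) * (2*y) ^ K / K.factorial := by rw [mul_pow]; ring
  have h0 : Tendsto (fun K : ℕ => (w+2) * ((2*y) ^ K / K.factorial)) atTop (nhds 0) := by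
    have := (FloorSemiring.tendsto_pow_div_factorial_atTop (2*y)).const_mul (w+2)
    simpa using this
  have : Tendsto (fun K : ℕ => (w + 2 * K) * y ^ K / K.factorial) atTop (nhds 0) := by
    apply squeeze_zero_norm hb
    simpa [mul_div_assoc] using h0
  simpa using this.const_mul C

noncomputable def cumAbs (f : ℤ → ℝ) (c : ℤ) : ℝ := ∑' m : {m : ℤ // m ≤ c}, |f m.1|

lemma cumAbs_nonneg (f : ℤ → ℝ) (c : ℤ) : 0 ≤ cumAbs f c :=
  tsum_nonneg fun m => abs_nonneg _

lemma sum_Icc_le_cumAbs (f : ℤ → ℝ) (c N : ℤ)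
    (h : Summable fun m : {m : ℤ // m ≤ c} => f m.1) :
    ∑ m ∈ Finset.Icc N c, |f m| ≤ cumAbs f c := by
  rcases le_or_gt N c with hNc | hNc
  · have key := tsum_split_aux (fun m => |f m|) c N (by omega) h.abs
    have h0 : 0 ≤ ∑' m : {m : ℤ // m ≤ N-1}, |f m.1| := tsum_nonneg fun m => abs_nonneg _
    unfold cumAbs
    rw [key]
    linarith
  · rw [Finset.Icc_eq_empty (not_le.mpr hNc), Finset.sum_empty]
    exact cumAbs_nonneg f c

lemma cumAbs_step (f : ℤ → ℝ) (c : ℤ)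
    (h : Summable fun m : {m : ℤ // m ≤ c + 1} => f m.1) :
    cumAbs f (c+1) = cumAbs f c + |f (c+1)| := by
  have key := tsum_split_aux (fun m => |f m|) (c+1) (c+1) (by omega) h.abs
  rw [Finset.Icc_self, Finset.sum_singleton] at key
  rw [show (c:ℤ) + 1 - 1 = c from by ring] at key
  exact key

lemma cumAbs_add_nat (f : ℤ → ℝ) (c : ℤ) (s : ℝ)
    (h : ∀ c : ℤ, Summable fun m : {m : ℤ // m ≤ c} => f m.1)
    (hbd : ∀ m : ℤ, |f m| ≤ s) (k : ℕ) :
    cumAbs f (c + k) ≤ cumAbs f c + k * s := by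
  induction k with
  | zero => simp
  | succ k ih =>
    have : cumAbs f (c + (k+1:ℕ)) = cumAbs f (c + k) + |f (c + k + 1)| := by
      have := cumAbs_step f (c + k) (h (c + k + 1))
      rw [← this]
      congr 1
      push_cast
      ring
    rw [this]
    push_cast
    have := hbd (c + k + 1)
    linarith

lemma key_induction (sq L' τ : ℝ) (Cc : ℤ → ℝ) (Z : ℤ → ℤ → ℝ → ℝ) (hL' : 0 ≤ L')
    (hbase : ∀ N n : ℤ, N ≤ n → ∀ t ∈ Icc (0:ℝ) τ, Z N n t ≤ 3*sq*((n - N + 1 : ℤ) : ℝ))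
    (hrec : ∀ N n : ℤ, N ≤ n → ∀ t ∈ Icc (0:ℝ) τ,
      Z N n t ≤ Cc n + L' * ∫ u in (0:ℝ)..t, Z (N-1) (n+1) u)
    (hcont : ∀ N n : ℤ, ContinuousOn (Z N n) (Icc (0:ℝ) τ)) :
    ∀ K : ℕ, ∀ n N : ℤ, N ≤ n → ∀ t ∈ Icc (0:ℝ) τ,
      Z N n t ≤ (∑ k ∈ Finset.range K, Cc (n + k) * (L'*t)^k / k.factorial)
        + 3*sq*(((n - N + 1 : ℤ) : ℝ) + 2*K) * (L'*t)^K / K.factorial := by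
  intro K
  induction K with
  | zero =>
    intro n N hNn t ht
    have := hbase N n hNn t ht
    simp only [Finset.range_zero, Finset.sum_empty, Nat.cast_zero, pow_zero,
      Nat.factorial_zero, Nat.cast_one, zero_add]
    rw [mul_one, div_one, mul_zero, add_zero]
    exact this
  | succ K ih =>
    intro n N hNn t ht
    have ht0 : (0:ℝ) ≤ t := ht.1
    have huIcc : uIcc (0:ℝ) t = Icc 0 t := uIcc_of_le ht0
    have hsubτ : Icc (0:ℝ) t ⊆ Icc (0:ℝ) τ := Icc_subset_Icc le_rfl ht.2
    have hintZ : IntervalIntegrable (Z (N-1) (n+1)) MeasureTheory.volume 0 t := by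
      apply ContinuousOn.intervalIntegrable
      rw [huIcc]
      exact (hcont _ _).mono hsubτ
    -- the dominating polynomial
    set g : ℝ → ℝ := fun u => (∑ k ∈ Finset.range K, Cc (n + 1 + k) * (L'*u)^k / k.factorial)
      + 3*sq*(((n + 1 - (N - 1) + 1 : ℤ) : ℝ) + 2*K) * (L'*u)^K / K.factorial with hg
    have hgcont : Continuous g := by
      apply Continuous.add
      · apply continuous_finset_sum
        intro k _
        fun_prop
      · fun_prop
    have h1 : ∫ u in (0:ℝ)..t, Z (N-1) (n+1) u ≤ ∫ u in (0:ℝ)..t, g u := by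
      apply intervalIntegral.integral_mono_on ht0 hintZ (hgcont.intervalIntegrable 0 t)
      intro u hu
      exact ih (n+1) (N-1) (by omega) u (hsubτ hu)
    have hint_pow : ∀ (c : ℝ) (k : ℕ), (∫ u in (0:ℝ)..t, c * (L'*u)^k / k.factorial)
        = c * L'^k * (t^(k+1) / ((k+1) * k.factorial)) := by
      intro c k
      have he : (fun u : ℝ => c * (L'*u)^k / k.factorial)
          = fun u : ℝ => (c * L'^k / k.factorial) * u^k := by
        funext u; rw [mul_pow]; ring
      rw [he, intervalIntegral.integral_const_mul, integral_pow,
        zero_pow (Nat.succ_ne_zero k), sub_zero]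
      have hk1 : ((k:ℝ)+1) ≠ 0 := by positivity
      have hkf : ((k.factorial : ℝ)) ≠ 0 := by positivity
      field_simp
    have h2 : ∫ u in (0:ℝ)..t, g u
        = (∑ k ∈ Finset.range K, Cc (n + 1 + k) * L'^k * (t^(k+1) / ((k+1) * k.factorial)))
          + (3*sq*(((n + 1 - (N - 1) + 1 : ℤ) : ℝ) + 2*K)) * L'^K
            * (t^(K+1) / ((K+1) * K.factorial)) := by
      rw [hg]
      rw [intervalIntegral.integral_add (by
          apply Continuous.intervalIntegrable
          apply continuous_finset_sum
          intro k _
          fun_prop)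
        (by apply Continuous.intervalIntegrable; fun_prop)]
      congr 1
      · rw [intervalIntegral.integral_finset_sum (fun k _ => by apply Continuous.intervalIntegrable; fun_prop)]
        exact Finset.sum_congr rfl fun k _ => hint_pow _ k
      · exact hint_pow _ K
    have hchain : Z N n t ≤ Cc n + L' * ∫ u in (0:ℝ)..t, g u := by
      calc Z N n t ≤ Cc n + L' * ∫ u in (0:ℝ)..t, Z (N-1) (n+1) u := hrec N n hNn t ht
        _ ≤ Cc n + L' * ∫ u in (0:ℝ)..t, g u := by
            exact add_le_add_right (mul_le_mul_of_nonneg_left h1 hL') _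
    have hterm : ∀ k : ℕ, Cc (n + ((k:ℕ)+1:ℕ)) * (L'*t)^(k+1) / (((k+1:ℕ).factorial : ℝ))
        = L' * (Cc (n+1+k) * L'^k * (t^(k+1)/((k+1) * k.factorial))) := by
      intro k
      have harg : (n + ((k:ℤ)+1)) = n+1+(k:ℤ) := by ring
      push_cast [Nat.factorial_succ]
      rw [harg, mul_pow]
      have hk1 : ((k:ℝ)+1) ≠ 0 := by positivity
      have hkf : ((k.factorial:ℝ)) ≠ 0 := by positivity
      field_simp
      ring
    have hrem : 3*sq*(((n - N + 1 : ℤ) : ℝ) + 2*((K+1:ℕ):ℝ)) * (L'*t)^(K+1) / (((K+1:ℕ).factorial:ℝ))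
        = L' * ((3*sq*(((n + 1 - (N - 1) + 1 : ℤ) : ℝ) + 2*K)) * L'^K * (t^(K+1)/((K+1) * K.factorial))) := by
      push_cast [Nat.factorial_succ]
      rw [mul_pow]
      have hk1 : ((K:ℝ)+1) ≠ 0 := by positivity
      have hkf : ((K.factorial:ℝ)) ≠ 0 := by positivity
      field_simp
      ring
    have hsum : ∑ k ∈ Finset.range K, Cc (n + ((k:ℕ)+1:ℕ)) * (L'*t)^(k+1) / (((k+1:ℕ).factorial : ℝ))
        = ∑ k ∈ Finset.range K, L' * (Cc (n+1+k) * L'^k * (t^(k+1)/((k+1) * k.factorial))) :=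
      Finset.sum_congr rfl fun k _ => hterm k
    calc Z N n t ≤ Cc n + L' * ∫ u in (0:ℝ)..t, g u := hchain
      _ = (∑ k ∈ Finset.range (K+1), Cc (n + k) * (L'*t)^k / k.factorial)
          + 3*sq*(((n - N + 1 : ℤ) : ℝ) + 2*((K+1:ℕ):ℝ)) * (L'*t)^(K+1) / (((K+1:ℕ).factorial:ℝ)) := by
        rw [h2, Finset.sum_range_succ']
        rw [mul_add, Finset.mul_sum, hsum, hrem]
        simp only [Nat.cast_zero, add_zero, pow_zero, Nat.factorial_zero, Nat.cast_one]
        ring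

lemma abs_lap_le (f : ℤ → ℝ) (m : ℤ) : |lap f m| ≤ |f (m+1)| + |f (m-1)| + 2*|f m| := by
  unfold lap
  rw [abs_le]
  constructor <;>
    [skip; skip] <;>
    · have h1 := le_abs_self (f (m+1)); have h2 := neg_abs_le (f (m+1))
      have h3 := le_abs_self (f (m-1)); have h4 := neg_abs_le (f (m-1))
      have h5 := le_abs_self (f m); have h6 := neg_abs_le (f m)
      linarith

/-- for a finite-energy solution of the FPU lattice with bounded summable
initial displacements, the displacement field `ũ_n(t) = Σ_{m≤n} α_m(t)` is well defined
and bounded on `ℤ × [0,T']` for every `T' < T`. -/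
theorem fpu_displacement_bounded (p : ℕ) (hp : 2 ≤ p) (χ : ℝ) (hχ : 0 < χ)
    (T : ℝ) (hT : 0 < T) (a b : ℤ → ℝ)
    (hb : ∀ n : ℤ, TailSummable b n)
    (hb2 : Summable fun n : ℤ => (tailSum b n) ^ 2)
    (ha2 : Summable fun n : ℤ => (a n) ^ 2)
    (haconv : ∀ n : ℤ, Summable (fun m : {m : ℤ // m ≤ n} => a m.1))
    (habd : ∃ K : ℝ, ∀ n : ℤ, |∑' m : {m : ℤ // m ≤ n}, a m.1| ≤ K)
    (α : ℤ → ℝ → ℝ)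
    (hC2 : ∀ n : ℤ, ContDiffOn ℝ 2 (α n) (Ico 0 T))
    (hsol : SolvesFPU p χ α (Ico 0 T))
    (hic1 : ∀ n : ℤ, α n 0 = a n)
    (hic2 : ∀ n : ℤ, derivWithin (α n) (Ico 0 T) 0 = b n)
    (hE : FiniteEnergyOn α (Ico 0 T) T) :
    (∀ n : ℤ, ∀ t ∈ Ico (0 : ℝ) T, Summable (fun m : {m : ℤ // m ≤ n} => α m.1 t)) ∧
    ∀ T' : ℝ, T' < T → ∃ K : ℝ, ∀ n : ℤ, ∀ t ∈ Icc (0 : ℝ) T',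
      |∑' m : {m : ℤ // m ≤ n}, α m.1 t| ≤ K := by
  obtain ⟨hTS, M, hM⟩ := hE
  obtain ⟨K₀, hK₀⟩ := habd
  have hud := uniqueDiffOn_Ico (0:ℝ) T
  set sq : ℝ := Real.sqrt M with hsq
  have hsq0 : 0 ≤ sq := Real.sqrt_nonneg M
  -- regularity
  have hC1D : ∀ m : ℤ, ContDiffOn ℝ 1 (derivWithin (α m) (Ico 0 T)) (Ico 0 T) :=
    fun m => ContDiffOn.derivWithin (m := 1) (hC2 m) hud (by norm_num)
  have hcα : ∀ m : ℤ, ContinuousOn (α m) (Ico 0 T) := fun m => (hC2 m).continuousOn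
  have hcD : ∀ m : ℤ, ContinuousOn (derivWithin (α m) (Ico 0 T)) (Ico 0 T) :=
    fun m => (hC1D m).continuousOn
  have hcD2 : ∀ m : ℤ,
      ContinuousOn (derivWithin (derivWithin (α m) (Ico 0 T)) (Ico 0 T)) (Ico 0 T) :=
    fun m => (ContDiffOn.derivWithin (m := 0) (hC1D m) hud (by norm_num)).continuousOn
  have hder1 : ∀ m : ℤ, ∀ u ∈ Ico (0:ℝ) T,
      HasDerivWithinAt (α m) (derivWithin (α m) (Ico 0 T) u) (Ico (0:ℝ) T) u :=
    fun m u hu => ((hC2 m).differentiableOn (by norm_num) u hu).hasDerivWithinAt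
  have hder2 : ∀ m : ℤ, ∀ u ∈ Ico (0:ℝ) T,
      HasDerivWithinAt (derivWithin (α m) (Ico 0 T))
        (derivWithin (derivWithin (α m) (Ico 0 T)) (Ico 0 T) u) (Ico (0:ℝ) T) u :=
    fun m u hu => ((hC1D m).differentiableOn one_ne_zero u hu).hasDerivWithinAt
  -- fundamental theorem of calculus
  have F1 : ∀ m : ℤ, ∀ t ∈ Ico (0:ℝ) T,
      (∫ u in (0:ℝ)..t, derivWithin (α m) (Ico 0 T) u) = α m t - a m := by
    intro m t ht
    rw [← hic1 m]
    exact ftc_Ico (α m) _ (hder1 m) (hcα m) (hcD m) ht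
  have F2 : ∀ m : ℤ, ∀ t ∈ Ico (0:ℝ) T,
      (∫ u in (0:ℝ)..t, derivWithin (derivWithin (α m) (Ico 0 T)) (Ico 0 T) u)
        = derivWithin (α m) (Ico 0 T) t - b m := by
    intro m t ht
    rw [← hic2 m]
    exact ftc_Ico _ _ (hder2 m) (hcD m) (hcD2 m) ht
  -- energy bounds
  have hαbd : ∀ m : ℤ, ∀ t ∈ Ico (0:ℝ) T, |α m t| ≤ sq := by
    intro m t ht
    obtain ⟨hs1, hs2, hle⟩ := hM t ht
    apply Real.abs_le_sqrt
    have h2 := Summable.le_tsum hs2 m (fun j _ => sq_nonneg _)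
    have h3 := tsum_nonneg (L := SummationFilter.unconditional ℤ)
      (fun n : ℤ => sq_nonneg (tailSum (fun m => derivWithin (α m) (Ico 0 T) t) n))
    linarith
  have hTsum : ∀ (c : ℤ), ∀ t ∈ Ico (0:ℝ) T,
      Summable (fun m : {m : ℤ // m ≤ c} => derivWithin (α m.1) (Ico 0 T) t) := by
    intro c t ht
    have := hTS (c+1) t ht
    unfold TailSummable at this
    rwa [show (c:ℤ) + 1 - 1 = c from by ring] at this
  have hTTbd : ∀ (c : ℤ), ∀ t ∈ Ico (0:ℝ) T,
      |∑' m : {m : ℤ // m ≤ c}, derivWithin (α m.1) (Ico 0 T) t| ≤ sq := by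
    intro c t ht
    obtain ⟨hs1, hs2, hle⟩ := hM t ht
    have h1 : tailSum (fun m => derivWithin (α m) (Ico 0 T) t) (c+1)
        = ∑' m : {m : ℤ // m ≤ c}, derivWithin (α m.1) (Ico 0 T) t := by
      unfold tailSum
      rw [show (c:ℤ) + 1 - 1 = c from by ring]
    rw [← h1]
    apply Real.abs_le_sqrt
    have h2 := Summable.le_tsum hs1 (c+1) (fun j _ => sq_nonneg _)
    have h3 := tsum_nonneg (L := SummationFilter.unconditional ℤ) (fun n : ℤ => sq_nonneg (α n t))
    linarith
  have hDbd : ∀ m : ℤ, ∀ t ∈ Ico (0:ℝ) T, |derivWithin (α m) (Ico 0 T) t| ≤ 2*sq := by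
    intro m t ht
    have key := tsum_split_aux (fun k => derivWithin (α k) (Ico 0 T) t) m m (by omega)
      (hTsum m t ht)
    rw [Finset.Icc_self, Finset.sum_singleton] at key
    have b1 := hTTbd m t ht
    have b2 := hTTbd (m-1) t ht
    rw [abs_le] at b1 b2 ⊢
    constructor <;> linarith [key]
  -- bound on the nonlinearity
  have hpowbd : ∀ x : ℝ, |x| ≤ sq → |x^p| ≤ sq^(p-1) * |x| := by
    intro x hx
    rw [abs_pow]
    calc |x| ^ p = |x| ^ (p-1) * |x| := by rw [← pow_succ]; congr 1; omega
      _ ≤ sq ^ (p-1) * |x| :=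
        mul_le_mul_of_nonneg_right (pow_le_pow_left₀ (abs_nonneg x) hx _) (abs_nonneg x)
  have hD2bd : ∀ m : ℤ, ∀ u ∈ Ico (0:ℝ) T,
      |derivWithin (derivWithin (α m) (Ico 0 T)) (Ico 0 T) u|
        ≤ (1 + χ*sq^(p-1)) * (|α (m+1) u| + |α (m-1) u| + 2*|α m u|) := by
    intro m u hu
    rw [hsol m u hu]
    have e1 := abs_lap_le (fun k => α k u) m
    have e2 := abs_lap_le (fun k => (α k u)^p) m
    have e3 : |(α (m+1) u)^p| ≤ sq^(p-1) * |α (m+1) u| := hpowbd _ (hαbd _ u hu)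
    have e4 : |(α (m-1) u)^p| ≤ sq^(p-1) * |α (m-1) u| := hpowbd _ (hαbd _ u hu)
    have e5 : |(α m u)^p| ≤ sq^(p-1) * |α m u| := hpowbd _ (hαbd _ u hu)
    have habs : |lap (fun k => α k u) m + χ * lap (fun k => (α k u)^p) m|
        ≤ |lap (fun k => α k u) m| + χ * |lap (fun k => (α k u)^p) m| := by
      calc _ ≤ |lap (fun k => α k u) m| + |χ * lap (fun k => (α k u)^p) m| := abs_add_le _ _
        _ = _ := by rw [abs_mul, abs_of_pos hχ]
    have hsqp : (0:ℝ) ≤ sq^(p-1) := by positivity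
    have h1 := abs_nonneg (α (m+1) u)
    have h2 := abs_nonneg (α (m-1) u)
    have h3 := abs_nonneg (α m u)
    nlinarith [mul_le_mul_of_nonneg_left e2 (le_of_lt hχ),
      mul_le_mul_of_nonneg_left (add_le_add (add_le_add e3 e4)
        (mul_le_mul_of_nonneg_left e5 (by norm_num : (0:ℝ) ≤ 2))) (le_of_lt hχ)]
  -- initial data bounds
  set saM : ℝ := Real.sqrt (∑' n : ℤ, (a n)^2) with hsaM
  have habsa : ∀ m : ℤ, |a m| ≤ saM :=
    fun m => Real.abs_le_sqrt (Summable.le_tsum ha2 m (fun j _ => sq_nonneg _))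
  set sqb : ℝ := Real.sqrt (∑' n : ℤ, (tailSum b n)^2) with hsqb
  have hbsum : ∀ c : ℤ, Summable (fun m : {m : ℤ // m ≤ c} => b m.1) := by
    intro c
    have := hb (c+1)
    unfold TailSummable at this
    rwa [show (c:ℤ) + 1 - 1 = c from by ring] at this
  have hbbd : ∀ m : ℤ, |b m| ≤ 2*sqb := by
    intro m
    have key := tsum_split_aux b m m (by omega) (hbsum m)
    rw [Finset.Icc_self, Finset.sum_singleton] at key
    have hTb : ∀ k : ℤ, |tailSum b k| ≤ sqb :=
      fun k => Real.abs_le_sqrt (Summable.le_tsum hb2 k (fun j _ => sq_nonneg _))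
    have b1 : |∑' m' : {m' : ℤ // m' ≤ m}, b m'.1| ≤ sqb := by
      have := hTb (m+1)
      unfold tailSum at this
      rwa [show (m:ℤ) + 1 - 1 = m from by ring] at this
    have b2 : |∑' m' : {m' : ℤ // m' ≤ m - 1}, b m'.1| ≤ sqb := hTb m
    rw [abs_le] at b1 b2 ⊢
    constructor <;> linarith [key]
  -- the constants
  set L' : ℝ := 1 + 4*(1 + χ*sq^(p-1)) with hL'
  have hL'0 : 0 ≤ L' := by positivity
  set Cc : ℤ → ℝ := fun c => cumAbs a c + cumAbs b c with hCc
  have hCc0 : ∀ c, 0 ≤ Cc c := fun c => add_nonneg (cumAbs_nonneg a c) (cumAbs_nonneg b c)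
  set c1 : ℝ := saM + 2*sqb with hc1
  have hc10 : 0 ≤ c1 := by
    have := habsa 0
    have := hbbd 0
    have := abs_nonneg (a 0)
    have := abs_nonneg (b 0)
    rw [hc1]; linarith
  have hCcle : ∀ (c : ℤ) (k : ℕ), Cc (c + k) ≤ Cc c + k * c1 := by
    intro c k
    have h1 := cumAbs_add_nat a c saM haconv habsa k
    have h2 := cumAbs_add_nat b c (2*sqb) hbsum hbbd k
    rw [hCc, hc1]
    dsimp only
    push_cast
    nlinarith [Nat.cast_nonneg (α := ℝ) k]
  -- the Picard functional
  set Zf : ℤ → ℤ → ℝ → ℝ := fun N n t =>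
    (∑ m ∈ Finset.Icc N n, |α m t|)
      + ∑ m ∈ Finset.Icc N n, |derivWithin (α m) (Ico 0 T) t| with hZf
  have hZcont : ∀ τ ∈ Ico (0:ℝ) T, ∀ N n : ℤ, ContinuousOn (Zf N n) (Icc (0:ℝ) τ) := by
    intro τ hτ N n
    have hsub : Icc (0:ℝ) τ ⊆ Ico (0:ℝ) T := fun x hx => ⟨hx.1, lt_of_le_of_lt hx.2 hτ.2⟩
    apply ContinuousOn.add
    · exact continuousOn_finset_sum _ fun m _ => ((hcα m).mono hsub).abs
    · exact continuousOn_finset_sum _ fun m _ => ((hcD m).mono hsub).abs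
  have hZbase : ∀ τ ∈ Ico (0:ℝ) T, ∀ N n : ℤ, N ≤ n → ∀ t ∈ Icc (0:ℝ) τ,
      Zf N n t ≤ 3*sq*((n - N + 1 : ℤ) : ℝ) := by
    intro τ hτ N n hNn t ht
    have htT : t ∈ Ico (0:ℝ) T := ⟨ht.1, lt_of_le_of_lt ht.2 hτ.2⟩
    have hcard : ((Finset.Icc N n).card : ℝ) = ((n - N + 1 : ℤ) : ℝ) := by
      rw [Int.card_Icc]
      rw [show ((n + 1 - N).toNat : ℝ) = (((n + 1 - N).toNat : ℤ) : ℝ) from by push_cast; ring]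
      rw [Int.toNat_of_nonneg (by omega)]
      push_cast; ring
    have h1 : ∑ m ∈ Finset.Icc N n, |α m t| ≤ (Finset.Icc N n).card * sq := by
      calc _ ≤ (Finset.Icc N n).card • sq :=
            Finset.sum_le_card_nsmul _ _ _ (fun m _ => hαbd m t htT)
        _ = _ := nsmul_eq_mul _ _
    have h2 : ∑ m ∈ Finset.Icc N n, |derivWithin (α m) (Ico 0 T) t|
        ≤ (Finset.Icc N n).card * (2*sq) := by
      calc _ ≤ (Finset.Icc N n).card • (2*sq) :=
            Finset.sum_le_card_nsmul _ _ _ (fun m _ => hDbd m t htT)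
        _ = _ := nsmul_eq_mul _ _
    rw [hZf]
    dsimp only
    rw [hcard] at h1 h2
    linarith
  have hZrec : ∀ τ ∈ Ico (0:ℝ) T, ∀ N n : ℤ, N ≤ n → ∀ t ∈ Icc (0:ℝ) τ,
      Zf N n t ≤ Cc n + L' * ∫ u in (0:ℝ)..t, Zf (N-1) (n+1) u := by
    intro τ hτ N n hNn t ht
    have htT : t ∈ Ico (0:ℝ) T := ⟨ht.1, lt_of_le_of_lt ht.2 hτ.2⟩
    have ht0 : (0:ℝ) ≤ t := ht.1
    have hsub1 : Icc (0:ℝ) t ⊆ Ico (0:ℝ) T := fun x hx => ⟨hx.1, lt_of_le_of_lt hx.2 htT.2⟩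
    have huIcc : uIcc (0:ℝ) t = Icc 0 t := uIcc_of_le ht0
    have hintD : ∀ m : ℤ, IntervalIntegrable
        (fun u => |derivWithin (α m) (Ico 0 T) u|) MeasureTheory.volume 0 t := by
      intro m
      apply ContinuousOn.intervalIntegrable
      rw [huIcc]; exact ((hcD m).mono hsub1).abs
    have hintD2 : ∀ m : ℤ, IntervalIntegrable
        (fun u => |derivWithin (derivWithin (α m) (Ico 0 T)) (Ico 0 T) u|)
        MeasureTheory.volume 0 t := by
      intro m
      apply ContinuousOn.intervalIntegrable
      rw [huIcc]; exact ((hcD2 m).mono hsub1).abs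
    have hintS : ∀ N' n' : ℤ, IntervalIntegrable
        (fun u => ∑ m ∈ Finset.Icc N' n', |α m u|) MeasureTheory.volume 0 t := by
      intro N' n'
      apply ContinuousOn.intervalIntegrable
      rw [huIcc]
      exact continuousOn_finset_sum _ fun m _ => ((hcα m).mono hsub1).abs
    have hintS' : ∀ N' n' : ℤ, IntervalIntegrable
        (fun u => ∑ m ∈ Finset.Icc N' n', |derivWithin (α m) (Ico 0 T) u|)
        MeasureTheory.volume 0 t := by
      intro N' n'
      apply ContinuousOn.intervalIntegrable
      rw [huIcc]
      exact continuousOn_finset_sum _ fun m _ => ((hcD m).mono hsub1).abs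
    have hintZ : IntervalIntegrable (Zf (N-1) (n+1)) MeasureTheory.volume 0 t :=
      (hintS (N-1) (n+1)).add (hintS' (N-1) (n+1))
    -- single-term estimates
    have e1 : ∀ m : ℤ, |α m t| ≤ |a m| + ∫ u in (0:ℝ)..t, |derivWithin (α m) (Ico 0 T) u| := by
      intro m
      have hf1 := F1 m t htT
      have habs : |∫ u in (0:ℝ)..t, derivWithin (α m) (Ico 0 T) u|
          ≤ ∫ u in (0:ℝ)..t, |derivWithin (α m) (Ico 0 T) u| := by
        simpa [Real.norm_eq_abs] using
          intervalIntegral.norm_integral_le_integral_norm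
            (f := fun u => derivWithin (α m) (Ico 0 T) u)
            (μ := MeasureTheory.volume) (a := 0) (b := t) ht0
      have : α m t = a m + ∫ u in (0:ℝ)..t, derivWithin (α m) (Ico 0 T) u := by
        linarith [hf1]
      rw [this]
      calc _ ≤ |a m| + |∫ u in (0:ℝ)..t, derivWithin (α m) (Ico 0 T) u| := abs_add_le _ _
        _ ≤ _ := by linarith
    have e2 : ∀ m : ℤ, |derivWithin (α m) (Ico 0 T) t|
        ≤ |b m| + ∫ u in (0:ℝ)..t, |derivWithin (derivWithin (α m) (Ico 0 T)) (Ico 0 T) u| := by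
      intro m
      have hf2 := F2 m t htT
      have habs : |∫ u in (0:ℝ)..t, derivWithin (derivWithin (α m) (Ico 0 T)) (Ico 0 T) u|
          ≤ ∫ u in (0:ℝ)..t, |derivWithin (derivWithin (α m) (Ico 0 T)) (Ico 0 T) u| := by
        simpa [Real.norm_eq_abs] using
          intervalIntegral.norm_integral_le_integral_norm
            (f := fun u => derivWithin (derivWithin (α m) (Ico 0 T)) (Ico 0 T) u)
            (μ := MeasureTheory.volume) (a := 0) (b := t) ht0
      have : derivWithin (α m) (Ico 0 T) t
          = b m + ∫ u in (0:ℝ)..t, derivWithin (derivWithin (α m) (Ico 0 T)) (Ico 0 T) u := by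
        linarith [hf2]
      rw [this]
      calc _ ≤ |b m| + |∫ u in (0:ℝ)..t, derivWithin (derivWithin (α m) (Ico 0 T)) (Ico 0 T) u| :=
            abs_add_le _ _
        _ ≤ _ := by linarith
    -- summed estimates
    have I1 : ∑ m ∈ Finset.Icc N n, |α m t|
        ≤ cumAbs a n + ∫ u in (0:ℝ)..t, ∑ m ∈ Finset.Icc N n, |derivWithin (α m) (Ico 0 T) u| := by
      calc ∑ m ∈ Finset.Icc N n, |α m t|
          ≤ ∑ m ∈ Finset.Icc N n,
            (|a m| + ∫ u in (0:ℝ)..t, |derivWithin (α m) (Ico 0 T) u|) :=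
            Finset.sum_le_sum fun m _ => e1 m
        _ = (∑ m ∈ Finset.Icc N n, |a m|)
            + ∑ m ∈ Finset.Icc N n, ∫ u in (0:ℝ)..t, |derivWithin (α m) (Ico 0 T) u| :=
            Finset.sum_add_distrib
        _ ≤ cumAbs a n
            + ∫ u in (0:ℝ)..t, ∑ m ∈ Finset.Icc N n, |derivWithin (α m) (Ico 0 T) u| := by
            apply add_le_add (sum_Icc_le_cumAbs a n N (haconv n))
            rw [intervalIntegral.integral_finset_sum (fun m _ => hintD m)]
    have I2 : ∑ m ∈ Finset.Icc N n, |derivWithin (α m) (Ico 0 T) t|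
        ≤ cumAbs b n + ∫ u in (0:ℝ)..t,
          ∑ m ∈ Finset.Icc N n, |derivWithin (derivWithin (α m) (Ico 0 T)) (Ico 0 T) u| := by
      calc ∑ m ∈ Finset.Icc N n, |derivWithin (α m) (Ico 0 T) t|
          ≤ ∑ m ∈ Finset.Icc N n, (|b m|
            + ∫ u in (0:ℝ)..t, |derivWithin (derivWithin (α m) (Ico 0 T)) (Ico 0 T) u|) :=
            Finset.sum_le_sum fun m _ => e2 m
        _ = (∑ m ∈ Finset.Icc N n, |b m|)
            + ∑ m ∈ Finset.Icc N n,
              ∫ u in (0:ℝ)..t, |derivWithin (derivWithin (α m) (Ico 0 T)) (Ico 0 T) u| :=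
            Finset.sum_add_distrib
        _ ≤ _ := by
            apply add_le_add (sum_Icc_le_cumAbs b n N (hbsum n))
            rw [intervalIntegral.integral_finset_sum (fun m _ => hintD2 m)]
    -- pointwise bound for the second derivative sum
    have I3 : ∀ u ∈ Icc (0:ℝ) t,
        ∑ m ∈ Finset.Icc N n, |derivWithin (derivWithin (α m) (Ico 0 T)) (Ico 0 T) u|
          ≤ 4*(1 + χ*sq^(p-1)) * ∑ m ∈ Finset.Icc (N-1) (n+1), |α m u| := by
      intro u hu
      have huT : u ∈ Ico (0:ℝ) T := hsub1 hu
      have hshift : ∀ c : ℤ, N - 1 ≤ N + c → n + c ≤ n + 1 →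
          ∑ m ∈ Finset.Icc N n, |α (m+c) u| ≤ ∑ m ∈ Finset.Icc (N-1) (n+1), |α m u| := by
        intro c hcl hcr
        have hmap : ∑ m ∈ Finset.Icc N n, |α (m+c) u|
            = ∑ m ∈ Finset.Icc (N+c) (n+c), |α m u| := by
          rw [← Finset.map_add_right_Icc, Finset.sum_map]
          rfl
        rw [hmap]
        apply Finset.sum_le_sum_of_subset_of_nonneg
          (Finset.Icc_subset_Icc (by omega) (by omega))
        intro m _ _
        exact abs_nonneg _
      have s1 : ∑ m ∈ Finset.Icc N n, |α (m+1) u|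
          ≤ ∑ m ∈ Finset.Icc (N-1) (n+1), |α m u| := hshift 1 (by omega) (by omega)
      have s2 : ∑ m ∈ Finset.Icc N n, |α (m-1) u|
          ≤ ∑ m ∈ Finset.Icc (N-1) (n+1), |α m u| := by
        have := hshift (-1) (by omega) (by omega)
        simpa [← sub_eq_add_neg] using this
      have s0 : ∑ m ∈ Finset.Icc N n, |α m u|
          ≤ ∑ m ∈ Finset.Icc (N-1) (n+1), |α m u| := by
        apply Finset.sum_le_sum_of_subset_of_nonneg
          (Finset.Icc_subset_Icc (by omega) (by omega))
        intro m _ _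
        exact abs_nonneg _
      calc ∑ m ∈ Finset.Icc N n, |derivWithin (derivWithin (α m) (Ico 0 T)) (Ico 0 T) u|
          ≤ ∑ m ∈ Finset.Icc N n,
              (1 + χ*sq^(p-1)) * (|α (m+1) u| + |α (m-1) u| + 2*|α m u|) :=
            Finset.sum_le_sum fun m _ => hD2bd m u huT
        _ = (1 + χ*sq^(p-1)) * ((∑ m ∈ Finset.Icc N n, |α (m+1) u|)
            + (∑ m ∈ Finset.Icc N n, |α (m-1) u|) + 2 * ∑ m ∈ Finset.Icc N n, |α m u|) := by
            rw [← Finset.mul_sum]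
            congr 1
            rw [Finset.sum_add_distrib, Finset.sum_add_distrib, ← Finset.mul_sum]
        _ ≤ (1 + χ*sq^(p-1)) * (4 * ∑ m ∈ Finset.Icc (N-1) (n+1), |α m u|) := by
            apply mul_le_mul_of_nonneg_left _ (by positivity)
            linarith
        _ = 4*(1 + χ*sq^(p-1)) * ∑ m ∈ Finset.Icc (N-1) (n+1), |α m u| := by ring
    -- assemble
    have hintSD2 : IntervalIntegrable
        (fun u => ∑ m ∈ Finset.Icc N n,
          |derivWithin (derivWithin (α m) (Ico 0 T)) (Ico 0 T) u|) MeasureTheory.volume 0 t := by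
      apply ContinuousOn.intervalIntegrable
      rw [huIcc]
      exact continuousOn_finset_sum _ fun m _ => ((hcD2 m).mono hsub1).abs
    have J1 : (∫ u in (0:ℝ)..t, ∑ m ∈ Finset.Icc N n,
        |derivWithin (derivWithin (α m) (Ico 0 T)) (Ico 0 T) u|)
        ≤ 4*(1 + χ*sq^(p-1)) * ∫ u in (0:ℝ)..t, Zf (N-1) (n+1) u := by
      calc _ ≤ ∫ u in (0:ℝ)..t, 4*(1 + χ*sq^(p-1)) * Zf (N-1) (n+1) u := by
            apply intervalIntegral.integral_mono_on ht0 hintSD2 (hintZ.const_mul _)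
            intro u hu
            refine le_trans (I3 u hu) (mul_le_mul_of_nonneg_left ?_ (by positivity))
            rw [hZf]
            dsimp only
            have : 0 ≤ ∑ m ∈ Finset.Icc (N-1) (n+1), |derivWithin (α m) (Ico 0 T) u| :=
              Finset.sum_nonneg fun m _ => abs_nonneg _
            linarith
        _ = _ := intervalIntegral.integral_const_mul _ _
    have J2 : (∫ u in (0:ℝ)..t, ∑ m ∈ Finset.Icc N n, |derivWithin (α m) (Ico 0 T) u|)
        ≤ ∫ u in (0:ℝ)..t, Zf (N-1) (n+1) u := by
      apply intervalIntegral.integral_mono_on ht0 (hintS' N n) hintZ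
      intro u hu
      rw [hZf]
      dsimp only
      have h1 : ∑ m ∈ Finset.Icc N n, |derivWithin (α m) (Ico 0 T) u|
          ≤ ∑ m ∈ Finset.Icc (N-1) (n+1), |derivWithin (α m) (Ico 0 T) u| := by
        apply Finset.sum_le_sum_of_subset_of_nonneg
          (Finset.Icc_subset_Icc (by omega) (by omega))
        intro m _ _
        exact abs_nonneg _
      have h2 : 0 ≤ ∑ m ∈ Finset.Icc (N-1) (n+1), |α m u| :=
        Finset.sum_nonneg fun m _ => abs_nonneg _
      linarith
    rw [hZf]
    dsimp only
    rw [hCc]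
    dsimp only
    rw [hL']
    have := add_le_add I1 I2
    have hJ := add_le_add J2 J1
    nlinarith [this, hJ]
  have hkey := fun (τ:ℝ) (hτ : τ ∈ Ico (0:ℝ) T) =>
    key_induction sq L' τ Cc Zf hL'0 (hZbase τ hτ) (hZrec τ hτ) (hZcont τ hτ)
  -- Part 1 : summability
  have hpart1 : ∀ n : ℤ, ∀ t ∈ Ico (0 : ℝ) T,
      Summable (fun m : {m : ℤ // m ≤ n} => α m.1 t) := by
    intro n t ht
    have ht0 : (0:ℝ) ≤ t := ht.1
    have hx0 : 0 ≤ L'*t := mul_nonneg hL'0 ht0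
    set E : ℝ := (Cc n) * Real.exp (L'*t) + c1 * ((L'*t) * Real.exp (L'*t)) with hEdef
    have hE0 : 0 ≤ E :=
      add_nonneg (mul_nonneg (hCc0 n) (Real.exp_pos _).le)
        (mul_nonneg hc10 (mul_nonneg hx0 (Real.exp_pos _).le))
    have hbound : ∀ N : ℤ, N ≤ n → (∑ m ∈ Finset.Icc N n, |α m t|) ≤ E := by
      intro N hN
      have hw0 : (0:ℝ) ≤ ((n - N + 1 : ℤ) : ℝ) := by exact_mod_cast (by omega : (0:ℤ) ≤ n - N + 1)
      have hall : ∀ K : ℕ, (∑ m ∈ Finset.Icc N n, |α m t|)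
          ≤ E + 3*sq * ((((n-N+1:ℤ)):ℝ) + 2*(K:ℝ)) * (L'*t)^K / (K.factorial : ℝ) := by
        intro K
        have hZle := hkey t ht K n N hN t ⟨ht0, le_rfl⟩
        have hsumle : (∑ k ∈ Finset.range K, Cc (n + k) * (L'*t)^k / (k.factorial:ℝ)) ≤ E := by
          calc (∑ k ∈ Finset.range K, Cc (n + k) * (L'*t)^k / (k.factorial:ℝ))
              ≤ ∑ k ∈ Finset.range K, (Cc n + k*c1) * (L'*t)^k / (k.factorial:ℝ) := by
                apply Finset.sum_le_sum
                intro k _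
                have hnum : Cc (n+(k:ℤ)) * (L'*t)^k ≤ (Cc n + (k:ℝ)*c1) * (L'*t)^k :=
                  mul_le_mul_of_nonneg_right (hCcle n k) (by positivity)
                rw [div_eq_mul_inv, div_eq_mul_inv]
                exact mul_le_mul_of_nonneg_right hnum (by positivity)
            _ ≤ E := sum_affine_exp_bound (Cc n) c1 (L'*t) (hCc0 n) hc10 hx0 K
        have hS : (∑ m ∈ Finset.Icc N n, |α m t|) ≤ Zf N n t := by
          rw [hZf]
          dsimp only
          have : 0 ≤ ∑ m ∈ Finset.Icc N n, |derivWithin (α m) (Ico 0 T) t| :=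
            Finset.sum_nonneg fun m _ => abs_nonneg _
          linarith
        calc (∑ m ∈ Finset.Icc N n, |α m t|) ≤ Zf N n t := hS
          _ ≤ _ := hZle
          _ ≤ _ := add_le_add_left hsumle _
      have hlim : Tendsto (fun K : ℕ =>
          E + 3*sq * ((((n-N+1:ℤ)):ℝ) + 2*(K:ℝ)) * (L'*t)^K / (K.factorial : ℝ)) atTop (nhds E) := by
        have h0 := tendsto_rem (((n-N+1:ℤ)):ℝ) (L'*t) (3*sq) hw0 hx0
        have heq : ∀ K : ℕ, 3*sq * ((((n-N+1:ℤ)):ℝ) + 2*(K:ℝ)) * (L'*t)^K / (K.factorial : ℝ)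
            = 3*sq * (((((n-N+1:ℤ)):ℝ) + 2*(K:ℝ)) * (L'*t)^K / (K.factorial : ℝ)) := by
          intro K; ring
        simp only [heq]
        simpa using h0.const_add E
      exact ge_of_tendsto' hlim hall
    have habs : Summable (fun m : {m : ℤ // m ≤ n} => |α m.1 t|) := by
      apply summable_of_sum_le (c := E) (fun m => abs_nonneg _)
      intro F
      by_cases hF : F.Nonempty
      · have hFne : (F.image (fun x : {m:ℤ // m ≤ n} => x.1)).Nonempty := hF.image _
        set N := (F.image (fun x : {m:ℤ // m ≤ n} => x.1)).min' hFne with hN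
        have hNmem := Finset.min'_mem (F.image (fun x : {m:ℤ // m ≤ n} => x.1)) hFne
        obtain ⟨x₀, hx₀F, hx₀⟩ := Finset.mem_image.mp hNmem
        have hNn : N ≤ n := by rw [hN, ← hx₀]; exact x₀.2
        have hsubset : F.image (fun x : {m:ℤ//m ≤ n} => x.1) ⊆ Finset.Icc N n := by
          intro m hm
          rw [Finset.mem_Icc]
          refine ⟨Finset.min'_le _ m hm, ?_⟩
          obtain ⟨y, _, rfl⟩ := Finset.mem_image.mp hm
          exact y.2
        have himg : ∑ m ∈ F.image (fun x : {m:ℤ//m ≤ n} => x.1), |α m t|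
            = ∑ x ∈ F, |α x.1 t| := Finset.sum_image (fun x _ y _ h => Subtype.ext h)
        calc ∑ x ∈ F, |α x.1 t| = ∑ m ∈ F.image (fun x : {m:ℤ//m ≤ n} => x.1), |α m t| :=
              himg.symm
          _ ≤ ∑ m ∈ Finset.Icc N n, |α m t| :=
              Finset.sum_le_sum_of_subset_of_nonneg hsubset (fun _ _ _ => abs_nonneg _)
          _ ≤ E := hbound N hNn
      · rw [Finset.not_nonempty_iff_eq_empty.mp hF]
        simpa using hE0
    exact habs.of_abs
  refine ⟨hpart1, ?_⟩
  -- Part 2 : boundedness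
  intro T' hT'
  refine ⟨K₀ + 2*sq*T, ?_⟩
  intro n t ht
  have htT : t ∈ Ico (0:ℝ) T := ⟨ht.1, lt_of_le_of_lt ht.2 hT'⟩
  have ht0 : (0:ℝ) ≤ t := ht.1
  have hsub1 : Icc (0:ℝ) t ⊆ Ico (0:ℝ) T := fun x hx => ⟨hx.1, lt_of_le_of_lt hx.2 htT.2⟩
  have huIcc : uIcc (0:ℝ) t = Icc 0 t := uIcc_of_le ht0
  have hsummα := hpart1 n t htT
  have hdiff : ∀ N : ℕ, |∑ m ∈ Finset.Icc (n - (N:ℤ)) n, α m t|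
      ≤ |∑ m ∈ Finset.Icc (n - (N:ℤ)) n, a m| + 2*sq*t := by
    intro N
    have hintDm : ∀ m : ℤ, IntervalIntegrable
        (fun u => derivWithin (α m) (Ico 0 T) u) MeasureTheory.volume 0 t := by
      intro m
      apply ContinuousOn.intervalIntegrable
      rw [huIcc]
      exact (hcD m).mono hsub1
    have h1 : (∑ m ∈ Finset.Icc (n - (N:ℤ)) n, α m t) - ∑ m ∈ Finset.Icc (n-(N:ℤ)) n, a m
        = ∫ u in (0:ℝ)..t, ∑ m ∈ Finset.Icc (n-(N:ℤ)) n, derivWithin (α m) (Ico 0 T) u := by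
      rw [intervalIntegral.integral_finset_sum (fun m _ => hintDm m), ← Finset.sum_sub_distrib]
      exact Finset.sum_congr rfl fun m _ => (F1 m t htT).symm
    have h2 : ∀ u ∈ Icc (0:ℝ) t,
        |∑ m ∈ Finset.Icc (n-(N:ℤ)) n, derivWithin (α m) (Ico 0 T) u| ≤ 2*sq := by
      intro u hu
      have huT := hsub1 hu
      have key := tsum_split_aux (fun m => derivWithin (α m) (Ico 0 T) u) n (n - N)
        (by omega) (hTsum n u huT)
      have b1 := hTTbd n u huT
      have b2 := hTTbd (n - N - 1) u huT
      rw [abs_le] at b1 b2 ⊢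
      constructor <;> linarith [key]
    have hintSD : IntervalIntegrable
        (fun u => |∑ m ∈ Finset.Icc (n-(N:ℤ)) n, derivWithin (α m) (Ico 0 T) u|)
        MeasureTheory.volume 0 t := by
      apply ContinuousOn.intervalIntegrable
      rw [huIcc]
      exact (continuousOn_finset_sum _ fun m _ => (hcD m).mono hsub1).abs
    have h3 : |∫ u in (0:ℝ)..t, ∑ m ∈ Finset.Icc (n-(N:ℤ)) n, derivWithin (α m) (Ico 0 T) u|
        ≤ 2*sq*t := by
      calc |∫ u in (0:ℝ)..t, ∑ m ∈ Finset.Icc (n-(N:ℤ)) n, derivWithin (α m) (Ico 0 T) u|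
          ≤ ∫ u in (0:ℝ)..t, |∑ m ∈ Finset.Icc (n-(N:ℤ)) n, derivWithin (α m) (Ico 0 T) u| := by
            simpa [Real.norm_eq_abs] using
              intervalIntegral.norm_integral_le_integral_norm
                (f := fun u => ∑ m ∈ Finset.Icc (n-(N:ℤ)) n, derivWithin (α m) (Ico 0 T) u)
                (μ := MeasureTheory.volume) (a := 0) (b := t) ht0
        _ ≤ ∫ _u in (0:ℝ)..t, (2*sq) :=
            intervalIntegral.integral_mono_on ht0 hintSD intervalIntegrable_const h2
        _ = 2*sq*t := by
            rw [intervalIntegral.integral_const]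
            simp
            ring
    have heq : (∑ m ∈ Finset.Icc (n - (N:ℤ)) n, α m t)
        = (∑ m ∈ Finset.Icc (n-(N:ℤ)) n, a m)
          + ∫ u in (0:ℝ)..t, ∑ m ∈ Finset.Icc (n-(N:ℤ)) n, derivWithin (α m) (Ico 0 T) u := by
      linarith [h1]
    rw [heq]
    calc _ ≤ |∑ m ∈ Finset.Icc (n-(N:ℤ)) n, a m|
        + |∫ u in (0:ℝ)..t, ∑ m ∈ Finset.Icc (n-(N:ℤ)) n, derivWithin (α m) (Ico 0 T) u| :=
          abs_add_le _ _
      _ ≤ _ := by linarith [h3]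
  have l1 : Tendsto (fun N : ℕ => |∑ m ∈ Finset.Icc (n - (N:ℤ)) n, α m t|) atTop
      (nhds |∑' m : {m : ℤ // m ≤ n}, α m.1 t|) :=
    (tendsto_sum_Icc (fun m => α m t) n hsummα).abs
  have l2 : Tendsto (fun N : ℕ => |∑ m ∈ Finset.Icc (n - (N:ℤ)) n, a m| + 2*sq*t) atTop
      (nhds (|∑' m : {m : ℤ // m ≤ n}, a m.1| + 2*sq*t)) :=
    ((tendsto_sum_Icc a n (haconv n)).abs).add_const _
  have hfin := le_of_tendsto_of_tendsto' l1 l2 hdiff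
  have h2sq : 2*sq*t ≤ 2*sq*T :=
    mul_le_mul_of_nonneg_left (le_of_lt htT.2) (by positivity)
  calc |∑' m : {m : ℤ // m ≤ n}, α m.1 t|
      ≤ |∑' m : {m : ℤ // m ≤ n}, a m.1| + 2*sq*t := hfin
    _ ≤ K₀ + 2*sq*T := add_le_add (hK₀ n) h2sq
end

section
/- Let p ≥ 3 be an odd integer, χ_p > 0, T > 0, and let α = (α_n)_{n∈ℤ} be a family of C² real functions on [0,T) with finite energy solving the FPU equation α̈_n(t) = Δα_n(t) + χ_p·Δ(α_n(t)^p) for all n ∈ ℤ and t ∈ [0,T). Define E(t) = Σ_{n∈ℤ} [ (1/2)(Σ_{m≤n−1} α̇_m(t))² + (1/2)α_n(t)² + (χ_p/(p+1))·α_n(t)^{p+1} ]. Assume that the series defining E(t) converges for each t ∈ [0,T), and that this series as well as the series of its term-wise time derivatives converge locally uniformly on [0,T). Then E(t) = E(0) for all t ∈ [0,T). -/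
open Set Filter MeasureTheory intervalIntegral Topology Interval

private lemma tel_sum_aux (c : ℤ → ℝ) (a : ℤ) (k : ℕ) :
    ∑ n ∈ Finset.Icc a (a + k), (c n - c (n-1)) = c (a + k) - c (a-1) := by
  induction k with
  | zero => simp
  | succ k ih =>
    have h1 : Finset.Icc a (a + (k+1:ℕ)) = insert (a + k + 1) (Finset.Icc a (a + k)) := by
      ext x; simp only [Finset.mem_Icc, Finset.mem_insert]; omega
    rw [h1, Finset.sum_insert (by simp only [Finset.mem_Icc]; omega), ih]
    have h2 : a + k + 1 - 1 = a + k := by ring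
    have h3 : a + ((k:ℤ)+1) = a + k + 1 := by push_cast; ring
    have h4 : a + (((k:ℕ)+1 : ℕ) : ℤ) = a + (k:ℤ) + 1 := by push_cast; ring
    rw [h2, h4]
    ring

private lemma tel_sum (c : ℤ → ℝ) (a b : ℤ) (hab : a ≤ b) :
    ∑ n ∈ Finset.Icc a b, (c n - c (n-1)) = c b - c (a-1) := by
  have h : b = a + (b - a).toNat := by omega
  rw [h]; exact tel_sum_aux c a _

private lemma icc_tendsto : Tendsto (fun N : ℕ => Finset.Icc (-(N:ℤ)) (N:ℤ)) atTop atTop := by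
  apply tendsto_atTop_finset_of_monotone
  · intro i j hij
    apply Finset.Icc_subset_Icc <;> omega
  · intro x
    refine ⟨x.natAbs, ?_⟩
    simp only [Finset.mem_Icc]
    omega

/-- Nonlinear flux. -/
noncomputable def bet (χ : ℝ) (p : ℕ) (α : ℤ → ℝ → ℝ) (n : ℤ) (t : ℝ) : ℝ :=
  α n t + χ * (α n t)^p


/-- conservation of the energy
`E(t) = Σ_n [ ½(Σ_{m≤n-1} α̇_m)² + ½α_n² + (χ_p/(p+1)) α_n^{p+1} ]`
for a finite-energy solution of the FPU lattice, assuming the series defining `E` as well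
as the series of its term-wise time derivatives converge locally uniformly on `[0,T)`. -/
theorem fpu_energy_conservation (p : ℕ) (hodd : Odd p) (hp : 3 ≤ p)
    (χ T : ℝ) (hχ : 0 < χ) (hT : 0 < T)
    (α : ℤ → ℝ → ℝ)
    (hC2 : ∀ n : ℤ, ContDiffOn ℝ 2 (α n) (Ico 0 T))
    (hE : FiniteEnergyOn α (Ico 0 T) T)
    (hsol : SolvesFPU p χ α (Ico 0 T))
    (e : ℤ → ℝ → ℝ)
    (he : ∀ (n : ℤ) (t : ℝ),
      e n t = (1 / 2) * (tailSum (fun m => derivWithin (α m) (Ico 0 T) t) n) ^ 2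
        + (1 / 2) * (α n t) ^ 2 + (χ / ((p : ℝ) + 1)) * (α n t) ^ (p + 1))
    (hconv : ∀ t ∈ Ico (0 : ℝ) T, Summable (fun n : ℤ => e n t))
    (hdiff : ∀ n : ℤ, DifferentiableOn ℝ (e n) (Ico 0 T))
    (hu1 : TendstoLocallyUniformlyOn (fun (s : Finset ℤ) (t : ℝ) => ∑ n ∈ s, e n t)
      (fun t => ∑' n : ℤ, e n t) atTop (Ico 0 T))
    (hu2 : TendstoLocallyUniformlyOn
      (fun (s : Finset ℤ) (t : ℝ) => ∑ n ∈ s, derivWithin (e n) (Ico 0 T) t)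
      (fun t => ∑' n : ℤ, derivWithin (e n) (Ico 0 T) t) atTop (Ico 0 T)) :
    ∀ t ∈ Ico (0 : ℝ) T, (∑' n : ℤ, e n t) = ∑' n : ℤ, e n 0 := by
  have h0T : (0:ℝ) ∈ Ico (0:ℝ) T := ⟨le_refl 0, hT⟩
  have hI : UniqueDiffOn ℝ (Ico (0:ℝ) T) := uniqueDiffOn_Ico 0 T
  -- basic regularity
  have hcont0 : ∀ n, ContinuousOn (α n) (Ico (0:ℝ) T) := fun n => (hC2 n).continuousOn
  have hd0 : ∀ n, DifferentiableOn ℝ (α n) (Ico (0:ℝ) T) :=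
    fun n => (hC2 n).differentiableOn (by norm_num)
  have hcd1 : ∀ n, ContDiffOn ℝ 1 (derivWithin (α n) (Ico (0:ℝ) T)) (Ico (0:ℝ) T) :=
    fun n => (hC2 n).derivWithin hI (by norm_num)
  have hcont1 : ∀ n, ContinuousOn (derivWithin (α n) (Ico (0:ℝ) T)) (Ico (0:ℝ) T) :=
    fun n => (hcd1 n).continuousOn
  have hd1 : ∀ n, DifferentiableOn ℝ (derivWithin (α n) (Ico (0:ℝ) T)) (Ico (0:ℝ) T) :=
    fun n => (hcd1 n).differentiableOn (by norm_num)
  have hcont2 : ∀ n, ContinuousOn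
      (derivWithin (derivWithin (α n) (Ico (0:ℝ) T)) (Ico (0:ℝ) T)) (Ico (0:ℝ) T) := by
    intro n
    have := ContDiffOn.derivWithin (m := 0) (hcd1 n) hI (by norm_num)
    exact this.continuousOn
  -- the nonlinear flux β
  have hβcont : ∀ n, ContinuousOn (fun t => bet χ p α n t) (Ico (0:ℝ) T) := by
    intro n
    simp only [bet]
    exact (hcont0 n).add (continuousOn_const.mul ((hcont0 n).pow p))
  obtain ⟨M, hM⟩ := hE.2
  -- uniform bounds
  have hsq : ∀ x M' : ℝ, x^2 ≤ M' → |x| ≤ Real.sqrt M' := by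
    intro x M' h
    rw [← Real.sqrt_sq_eq_abs]
    exact Real.sqrt_le_sqrt h
  have hαbd : ∀ t ∈ Ico (0:ℝ) T, ∀ n, |α n t| ≤ Real.sqrt M := by
    intro t ht n
    refine hsq _ _ ?_
    have h1 : (α n t)^2 ≤ ∑' k : ℤ, (α k t)^2 :=
      Summable.le_tsum (hM t ht).2.1 n (fun j _ => sq_nonneg _)
    have h2 : (∑' k : ℤ, (α k t)^2) ≤ M := by
      have h3 : (0:ℝ) ≤ ∑' k : ℤ, (tailSum (fun m => derivWithin (α m) (Ico (0:ℝ) T) t) k)^2 :=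
        tsum_nonneg (fun k => sq_nonneg _)
      linarith [(hM t ht).2.2]
    linarith
  have hSbd : ∀ t ∈ Ico (0:ℝ) T, ∀ n,
      |tailSum (fun m => derivWithin (α m) (Ico (0:ℝ) T) t) n| ≤ Real.sqrt M := by
    intro t ht n
    refine hsq _ _ ?_
    have h1 : (tailSum (fun m => derivWithin (α m) (Ico (0:ℝ) T) t) n)^2
        ≤ ∑' k : ℤ, (tailSum (fun m => derivWithin (α m) (Ico (0:ℝ) T) t) k)^2 :=
      Summable.le_tsum (hM t ht).1 n (fun j _ => sq_nonneg _)
    have h3 : (0:ℝ) ≤ ∑' k : ℤ, (α k t)^2 := tsum_nonneg (fun k => sq_nonneg _)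
    linarith [(hM t ht).2.2]
  have hβbd : ∀ t ∈ Ico (0:ℝ) T, ∀ n,
      |bet χ p α n t| ≤ Real.sqrt M + χ * (Real.sqrt M)^p := by
    intro t ht n
    have h1 := hαbd t ht n
    rw [bet]
    calc |α n t + χ * (α n t)^p| ≤ |α n t| + |χ * (α n t)^p| := abs_add_le _ _
      _ = |α n t| + χ * |α n t|^p := by rw [abs_mul, abs_pow, abs_of_pos hχ]
      _ ≤ Real.sqrt M + χ * (Real.sqrt M)^p := by
          gcongr
  have hβ0 : ∀ t ∈ Ico (0:ℝ) T,
      Tendsto (fun n : ℤ => bet χ p α n t) cofinite (𝓝 0) := by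
    intro t ht
    simp only [bet]
    have h2 : Tendsto (fun n : ℤ => (α n t)^2) cofinite (𝓝 0) :=
      (hM t ht).2.1.tendsto_cofinite_zero
    have habs : Tendsto (fun n : ℤ => |α n t|) cofinite (𝓝 0) := by
      have := (Real.continuous_sqrt.tendsto 0).comp h2
      simpa [Function.comp_def, Real.sqrt_sq_eq_abs] using this
    have hα0 : Tendsto (fun n : ℤ => α n t) cofinite (𝓝 0) :=
      squeeze_zero_norm (fun n => le_of_eq (Real.norm_eq_abs _)) habs
    have hF : Continuous (fun x : ℝ => x + χ * x^p) :=
      continuous_id.add (continuous_const.mul (continuous_pow p))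
    have := (hF.tendsto 0).comp hα0
    simpa [Function.comp_def, zero_pow (by omega : p ≠ 0)] using this
  -- the second derivative in terms of β
  have hA2eq : ∀ n, ∀ t ∈ Ico (0:ℝ) T,
      derivWithin (derivWithin (α n) (Ico (0:ℝ) T)) (Ico (0:ℝ) T) t
        = (bet χ p α (n+1) t - bet χ p α n t)
          - (bet χ p α n t - bet χ p α (n-1) t) := by
    intro n t ht
    rw [hsol n t ht]
    simp only [lap, bet]
    ring
  -- FTC for the first derivatives
  have hFTC1 : ∀ m, ∀ t ∈ Ico (0:ℝ) T,
      ∫ s in (0:ℝ)..t, derivWithin (derivWithin (α m) (Ico (0:ℝ) T)) (Ico (0:ℝ) T) s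
        = derivWithin (α m) (Ico (0:ℝ) T) t - derivWithin (α m) (Ico (0:ℝ) T) 0 := by
    intro m t ht
    have hsub : Icc (0:ℝ) t ⊆ Ico (0:ℝ) T := fun x hx => ⟨hx.1, lt_of_le_of_lt hx.2 ht.2⟩
    refine intervalIntegral.integral_eq_sub_of_hasDeriv_right_of_le ht.1
      ((hcont1 m).mono hsub) ?_ ?_
    · intro x hx
      have hnh : Ico (0:ℝ) T ∈ 𝓝 x := Ico_mem_nhds hx.1 (hx.2.trans ht.2)
      have hxI : x ∈ Ico (0:ℝ) T := ⟨hx.1.le, hx.2.trans ht.2⟩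
      exact ((((hd1 m) x hxI).hasDerivWithinAt).hasDerivAt hnh).hasDerivWithinAt
    · apply ContinuousOn.intervalIntegrable
      rw [uIcc_of_le ht.1]
      exact (hcont2 m).mono hsub
  have hint2 : ∀ (m : ℤ) (t : ℝ), t ∈ Ico (0:ℝ) T →
      IntervalIntegrable (derivWithin (derivWithin (α m) (Ico (0:ℝ) T)) (Ico (0:ℝ) T))
        volume 0 t := by
    intro m t ht
    apply ContinuousOn.intervalIntegrable
    rw [uIcc_of_le ht.1]
    exact (hcont2 m).mono (fun x hx => ⟨hx.1, lt_of_le_of_lt hx.2 ht.2⟩)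
  have habs2 : ∀ a b : ℝ, |a - b| ≤ |a| + |b| := by
    intro a b
    rw [sub_eq_add_neg]
    exact (abs_add_le _ _).trans (by rw [abs_neg])
  -- integral representation of the tail sums
  have hSint : ∀ n, ∀ t ∈ Ico (0:ℝ) T,
      tailSum (fun m => derivWithin (α m) (Ico (0:ℝ) T) t) n
        = tailSum (fun m => derivWithin (α m) (Ico (0:ℝ) T) 0) n
          + ∫ s in (0:ℝ)..t, (bet χ p α n s - bet χ p α (n-1) s) := by
    intro n t ht
    have hst := hE.1 n t ht
    have hs0 := hE.1 n 0 h0T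
    have hdS : Summable (fun m : {m : ℤ // m ≤ n - 1} =>
        derivWithin (α m.1) (Ico (0:ℝ) T) t - derivWithin (α m.1) (Ico (0:ℝ) T) 0) :=
      hst.sub hs0
    let Eqv : ℕ ≃ {m : ℤ // m ≤ n - 1} :=
      { toFun := fun k => ⟨n - 1 - k, by omega⟩
        invFun := fun m => (n - 1 - m.1).toNat
        left_inv := fun k => by simp only; omega
        right_inv := fun m => by
          apply Subtype.ext
          have := m.2
          simp only
          omega }
    have hEqv : ∀ k : ℕ, (Eqv k).1 = n - 1 - k := fun k => rfl
    have hsN : Summable (fun k : ℕ =>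
        derivWithin (α (n - 1 - (k:ℤ))) (Ico (0:ℝ) T) t
          - derivWithin (α (n - 1 - (k:ℤ))) (Ico (0:ℝ) T) 0) :=
      (Eqv.summable_iff.mpr hdS).congr (fun k => rfl)
    have htsum_eq : (∑' m : {m : ℤ // m ≤ n - 1},
        (derivWithin (α m.1) (Ico (0:ℝ) T) t - derivWithin (α m.1) (Ico (0:ℝ) T) 0))
        = ∑' k : ℕ, (derivWithin (α (n - 1 - (k:ℤ))) (Ico (0:ℝ) T) t
            - derivWithin (α (n - 1 - (k:ℤ))) (Ico (0:ℝ) T) 0) := by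
      rw [← Equiv.tsum_eq Eqv (fun m : {m : ℤ // m ≤ n - 1} =>
        derivWithin (α m.1) (Ico (0:ℝ) T) t - derivWithin (α m.1) (Ico (0:ℝ) T) 0)]
      exact tsum_congr (fun k => rfl)
    -- partial sums via telescoping
    have hpartial : ∀ N : ℕ,
        (∑ k ∈ Finset.range N, (derivWithin (α (n - 1 - (k:ℤ))) (Ico (0:ℝ) T) t
            - derivWithin (α (n - 1 - (k:ℤ))) (Ico (0:ℝ) T) 0))
        = ∫ s in (0:ℝ)..t, ((bet χ p α n s - bet χ p α (n-1) s)
            - (bet χ p α (n-(N:ℤ)) s - bet χ p α (n-(N:ℤ)-1) s)) := by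
      intro N
      have h1 : ∀ k ∈ Finset.range N,
          (derivWithin (α (n - 1 - (k:ℤ))) (Ico (0:ℝ) T) t
            - derivWithin (α (n - 1 - (k:ℤ))) (Ico (0:ℝ) T) 0)
          = ∫ s in (0:ℝ)..t,
              derivWithin (derivWithin (α (n - 1 - (k:ℤ))) (Ico (0:ℝ) T)) (Ico (0:ℝ) T) s :=
        fun k _ => (hFTC1 (n - 1 - k) t ht).symm
      rw [Finset.sum_congr rfl h1,
        ← intervalIntegral.integral_finset_sum (fun (k : ℕ) _ => hint2 (n - 1 - (k:ℤ)) t ht)]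
      apply intervalIntegral.integral_congr
      intro s hs
      beta_reduce
      rw [uIcc_of_le ht.1] at hs
      have hsI : s ∈ Ico (0:ℝ) T := ⟨hs.1, lt_of_le_of_lt hs.2 ht.2⟩
      have h2 : ∀ k ∈ Finset.range N,
          derivWithin (derivWithin (α (n - 1 - (k:ℤ))) (Ico (0:ℝ) T)) (Ico (0:ℝ) T) s
            = (fun j : ℕ => bet χ p α (n - 1 - (j:ℤ) + 1) s - bet χ p α (n - 1 - (j:ℤ)) s) k
              - (fun j : ℕ => bet χ p α (n - 1 - (j:ℤ) + 1) s - bet χ p α (n - 1 - (j:ℤ)) s)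
                  (k+1) := by
        intro k _
        simp only
        rw [hA2eq (n - 1 - (k:ℤ)) s hsI]
        have e0 : ((k+1:ℕ):ℤ) = (k:ℤ)+1 := by push_cast; ring
        rw [e0]
        rw [show n - 1 - ((k:ℤ)+1) + 1 = n - 1 - (k:ℤ) from by ring,
          show n - 1 - ((k:ℤ)+1) = n - 1 - (k:ℤ) - 1 from by ring]
      rw [Finset.sum_congr rfl h2, Finset.sum_range_sub'
        (fun j : ℕ => bet χ p α (n - 1 - (j:ℤ) + 1) s - bet χ p α (n - 1 - (j:ℤ)) s) N]
      simp only [Nat.cast_zero]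
      rw [show n - 1 - (0:ℤ) + 1 = n from by ring, show n - 1 - (0:ℤ) = n - 1 from by ring,
        show n - 1 - (N:ℤ) + 1 = n - (N:ℤ) from by ring,
        show n - 1 - (N:ℤ) = n - (N:ℤ) - 1 from by ring]
    -- dominated convergence for the boundary term
    have hconvInt : Tendsto (fun N : ℕ => ∫ s in (0:ℝ)..t,
        ((bet χ p α n s - bet χ p α (n-1) s)
          - (bet χ p α (n-(N:ℤ)) s - bet χ p α (n-(N:ℤ)-1) s)))
        atTop (𝓝 (∫ s in (0:ℝ)..t, (bet χ p α n s - bet χ p α (n-1) s))) := by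
      apply intervalIntegral.tendsto_integral_filter_of_dominated_convergence
        (bound := fun _ => 4 * (Real.sqrt M + χ * (Real.sqrt M)^p))
      · apply Eventually.of_forall
        intro N
        apply ContinuousOn.aestronglyMeasurable ?_ measurableSet_uIoc
        have hsub : Ι (0:ℝ) t ⊆ Ico (0:ℝ) T := by
          rw [uIoc_of_le ht.1]
          exact fun x hx => ⟨le_of_lt hx.1, lt_of_le_of_lt hx.2 ht.2⟩
        exact (((hβcont n).sub (hβcont (n-1))).sub
          ((hβcont (n-(N:ℤ))).sub (hβcont (n-(N:ℤ)-1)))).mono hsub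
      · apply Eventually.of_forall
        intro N
        apply Eventually.of_forall
        intro s hs
        have hsI : s ∈ Ico (0:ℝ) T := by
          rw [uIoc_of_le ht.1] at hs
          exact ⟨le_of_lt hs.1, lt_of_le_of_lt hs.2 ht.2⟩
        rw [Real.norm_eq_abs]
        have b1 := hβbd s hsI n
        have b2 := hβbd s hsI (n-1)
        have b3 := hβbd s hsI (n-(N:ℤ))
        have b4 := hβbd s hsI (n-(N:ℤ)-1)
        have t1 := habs2 (bet χ p α n s - bet χ p α (n-1) s)
          (bet χ p α (n-(N:ℤ)) s - bet χ p α (n-(N:ℤ)-1) s)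
        have t2 := habs2 (bet χ p α n s) (bet χ p α (n-1) s)
        have t3 := habs2 (bet χ p α (n-(N:ℤ)) s) (bet χ p α (n-(N:ℤ)-1) s)
        linarith
      · exact intervalIntegrable_const
      · apply Eventually.of_forall
        intro s hs
        have hsI : s ∈ Ico (0:ℝ) T := by
          rw [uIoc_of_le ht.1] at hs
          exact ⟨le_of_lt hs.1, lt_of_le_of_lt hs.2 ht.2⟩
        have hm1 : Tendsto (fun N : ℕ => (n - (N:ℤ))) atTop (cofinite : Filter ℤ) := by
          rw [← Nat.cofinite_eq_atTop]
          exact Function.Injective.tendsto_cofinite (fun a b h => by omega)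
        have hm2 : Tendsto (fun N : ℕ => (n - (N:ℤ) - 1)) atTop (cofinite : Filter ℤ) := by
          rw [← Nat.cofinite_eq_atTop]
          exact Function.Injective.tendsto_cofinite (fun a b h => by omega)
        have hb1 : Tendsto (fun N : ℕ => bet χ p α (n-(N:ℤ)) s) atTop (𝓝 0) :=
          (hβ0 s hsI).comp hm1
        have hb2 : Tendsto (fun N : ℕ => bet χ p α (n-(N:ℤ)-1) s) atTop (𝓝 0) :=
          (hβ0 s hsI).comp hm2
        have hc : Tendsto (fun _ : ℕ => bet χ p α n s - bet χ p α (n-1) s) atTop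
            (𝓝 (bet χ p α n s - bet χ p α (n-1) s)) := tendsto_const_nhds
        have := hc.sub (hb1.sub hb2)
        simpa using this
    have hlim1 : Tendsto (fun N : ℕ => ∑ k ∈ Finset.range N,
        (derivWithin (α (n - 1 - (k:ℤ))) (Ico (0:ℝ) T) t
          - derivWithin (α (n - 1 - (k:ℤ))) (Ico (0:ℝ) T) 0)) atTop
        (𝓝 (∑' k : ℕ, (derivWithin (α (n - 1 - (k:ℤ))) (Ico (0:ℝ) T) t
          - derivWithin (α (n - 1 - (k:ℤ))) (Ico (0:ℝ) T) 0))) :=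
      hsN.hasSum.tendsto_sum_nat
    have hkey : (∑' k : ℕ, (derivWithin (α (n - 1 - (k:ℤ))) (Ico (0:ℝ) T) t
          - derivWithin (α (n - 1 - (k:ℤ))) (Ico (0:ℝ) T) 0))
        = ∫ s in (0:ℝ)..t, (bet χ p α n s - bet χ p α (n-1) s) := by
      refine tendsto_nhds_unique hlim1 ?_
      have : (fun N : ℕ => ∑ k ∈ Finset.range N,
          (derivWithin (α (n - 1 - (k:ℤ))) (Ico (0:ℝ) T) t
            - derivWithin (α (n - 1 - (k:ℤ))) (Ico (0:ℝ) T) 0))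
          = (fun N : ℕ => ∫ s in (0:ℝ)..t, ((bet χ p α n s - bet χ p α (n-1) s)
            - (bet χ p α (n-(N:ℤ)) s - bet χ p α (n-(N:ℤ)-1) s))) := funext hpartial
      rw [this]
      exact hconvInt
    have hsub_tsum : tailSum (fun m => derivWithin (α m) (Ico (0:ℝ) T) t) n
        - tailSum (fun m => derivWithin (α m) (Ico (0:ℝ) T) 0) n
        = ∑' m : {m : ℤ // m ≤ n - 1},
            (derivWithin (α m.1) (Ico (0:ℝ) T) t - derivWithin (α m.1) (Ico (0:ℝ) T) 0) :=
      (Summable.tsum_sub hst hs0).symm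
    rw [htsum_eq, hkey] at hsub_tsum
    linarith
  -- derivative of the tail sums
  have hSderiv : ∀ n, ∀ t ∈ Ico (0:ℝ) T,
      HasDerivWithinAt (fun u => tailSum (fun m => derivWithin (α m) (Ico (0:ℝ) T) u) n)
        (bet χ p α n t - bet χ p α (n-1) t) (Ico (0:ℝ) T) t := by
    intro n t ht
    have hg : ContinuousOn (fun s => bet χ p α n s - bet χ p α (n-1) s) (Ico (0:ℝ) T) :=
      (hβcont n).sub (hβcont (n-1))
    have hFint : ∀ u ∈ Ico (0:ℝ) T,
        IntervalIntegrable (fun s => bet χ p α n s - bet χ p α (n-1) s) volume 0 u := by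
      intro u hu
      apply ContinuousOn.intervalIntegrable
      rw [uIcc_of_le hu.1]
      exact hg.mono (fun x hx => ⟨hx.1, lt_of_le_of_lt hx.2 hu.2⟩)
    have H : HasDerivWithinAt
        (fun u => tailSum (fun m => derivWithin (α m) (Ico (0:ℝ) T) 0) n
          + ∫ s in (0:ℝ)..u, (bet χ p α n s - bet χ p α (n-1) s))
        (bet χ p α n t - bet χ p α (n-1) t) (Ico (0:ℝ) T) t := by
      apply HasDerivWithinAt.const_add
      rcases eq_or_lt_of_le ht.1 with h0 | h0
      · -- t = 0
        have key : HasDerivWithinAt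
            (fun u => ∫ s in (0:ℝ)..u, (bet χ p α n s - bet χ p α (n-1) s))
            (bet χ p α n 0 - bet χ p α (n-1) 0) (Ici (0:ℝ)) 0 := by
          have hle : (𝓝[Ioi (0:ℝ)] 0) ≤ 𝓝[Ico (0:ℝ) T] 0 := by
            rw [nhdsWithin_Ico_eq_nhdsGE hT]
            exact nhdsWithin_mono 0 Ioi_subset_Ici_self
          apply intervalIntegral.integral_hasDerivWithinAt_right (t := Ioi (0:ℝ))
            (hFint 0 h0T)
          · exact ⟨Ico (0:ℝ) T, hle self_mem_nhdsWithin,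
              hg.aestronglyMeasurable measurableSet_Ico⟩
          · exact (hg 0 h0T).mono_left hle
        rw [← h0]
        exact key.mono Ico_subset_Ici_self
      · have hnh : Ico (0:ℝ) T ∈ 𝓝 t := Ico_mem_nhds h0 ht.2
        have key : HasDerivAt
            (fun u => ∫ s in (0:ℝ)..u, (bet χ p α n s - bet χ p α (n-1) s))
            (bet χ p α n t - bet χ p α (n-1) t) t := by
          apply intervalIntegral.integral_hasDerivAt_right (hFint t ht)
          · exact ⟨Ico (0:ℝ) T, hnh, hg.aestronglyMeasurable measurableSet_Ico⟩
          · exact hg.continuousAt hnh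
        exact key.hasDerivWithinAt
    exact H.congr (fun u hu => hSint n u hu) (hSint n t ht)
  have hScont : ∀ n, ContinuousOn
      (fun u => tailSum (fun m => derivWithin (α m) (Ico (0:ℝ) T) u) n) (Ico (0:ℝ) T) :=
    fun n u hu => (hSderiv n u hu).continuousWithinAt
  -- the step identity α̇_n = S_{n+1} - S_n
  have hStep : ∀ n : ℤ, ∀ t ∈ Ico (0:ℝ) T,
      derivWithin (α n) (Ico (0:ℝ) T) t
        = tailSum (fun m => derivWithin (α m) (Ico (0:ℝ) T) t) (n+1)
          - tailSum (fun m => derivWithin (α m) (Ico (0:ℝ) T) t) n := by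
    intro n t ht
    have hs0 := hE.1 n t ht
    have hind0 : Summable (Set.indicator {m : ℤ | m ≤ n - 1}
        (fun m => derivWithin (α m) (Ico (0:ℝ) T) t)) :=
      summable_subtype_iff_indicator.mp hs0
    have hsingle : Summable (fun m : ℤ => if m = n then derivWithin (α n) (Ico (0:ℝ) T) t
        else 0) := ⟨_, hasSum_ite_eq n _⟩
    have hA : tailSum (fun m => derivWithin (α m) (Ico (0:ℝ) T) t) (n+1)
        = ∑' m : ℤ, Set.indicator {m : ℤ | m ≤ n}
            (fun m => derivWithin (α m) (Ico (0:ℝ) T) t) m := by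
      simp only [tailSum]
      rw [show n + 1 - 1 = n from by ring]
      exact tsum_subtype {m : ℤ | m ≤ n} (fun m => derivWithin (α m) (Ico (0:ℝ) T) t)
    have hB : tailSum (fun m => derivWithin (α m) (Ico (0:ℝ) T) t) n
        = ∑' m : ℤ, Set.indicator {m : ℤ | m ≤ n - 1}
            (fun m => derivWithin (α m) (Ico (0:ℝ) T) t) m := by
      simp only [tailSum]
      exact tsum_subtype {m : ℤ | m ≤ n - 1} (fun m => derivWithin (α m) (Ico (0:ℝ) T) t)
    have hC : Set.indicator {m : ℤ | m ≤ n} (fun m => derivWithin (α m) (Ico (0:ℝ) T) t)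
        = fun m => Set.indicator {m : ℤ | m ≤ n - 1}
            (fun m => derivWithin (α m) (Ico (0:ℝ) T) t) m
          + (if m = n then derivWithin (α n) (Ico (0:ℝ) T) t else 0) := by
      funext m
      simp only [Set.indicator_apply, Set.mem_setOf_eq]
      by_cases h1 : m ≤ n - 1
      · rw [if_pos (show m ≤ n from by omega), if_pos h1,
          if_neg (show ¬ m = n from by omega)]
        ring
      · by_cases h2 : m = n
        · rw [if_pos (show m ≤ n from by omega), if_neg h1, if_pos h2, h2]
          ring
        · rw [if_neg (show ¬ m ≤ n from by omega), if_neg h1, if_neg h2]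
          ring
    rw [hA, hB, hC, Summable.tsum_add hind0 hsingle, tsum_ite_eq n]
    ring
  -- the derivative of the local energy
  have hEder : ∀ n : ℤ, ∀ t ∈ Ico (0:ℝ) T,
      derivWithin (e n) (Ico (0:ℝ) T) t
        = tailSum (fun m => derivWithin (α m) (Ico (0:ℝ) T) t) (n+1) * bet χ p α n t
          - tailSum (fun m => derivWithin (α m) (Ico (0:ℝ) T) t) n * bet χ p α (n-1) t := by
    intro n t ht
    have hud : UniqueDiffWithinAt ℝ (Ico (0:ℝ) T) t := hI t ht
    have hfe : e n = fun u =>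
        (1/2) * (tailSum (fun m => derivWithin (α m) (Ico (0:ℝ) T) u) n)^2
          + (1/2) * (α n u)^2 + (χ/((p:ℝ)+1)) * (α n u)^(p+1) :=
      funext (fun u => he n u)
    have hS := hSderiv n t ht
    have hα : HasDerivWithinAt (α n) (derivWithin (α n) (Ico (0:ℝ) T) t) (Ico (0:ℝ) T) t :=
      ((hd0 n) t ht).hasDerivWithinAt
    have h1 := (hS.pow 2).const_mul ((1:ℝ)/2)
    have h2 := (hα.pow 2).const_mul ((1:ℝ)/2)
    have h3 := (hα.pow (p+1)).const_mul (χ/((p:ℝ)+1))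
    have hcomb := (h1.add h2).add h3
    have hpne : ((p:ℝ)+1) ≠ 0 := by positivity
    have hgoal : HasDerivWithinAt (e n)
        (tailSum (fun m => derivWithin (α m) (Ico (0:ℝ) T) t) (n+1) * bet χ p α n t
          - tailSum (fun m => derivWithin (α m) (Ico (0:ℝ) T) t) n * bet χ p α (n-1) t)
        (Ico (0:ℝ) T) t := by
      rw [hfe]
      convert hcomb using 1
      · rfl
      · rfl
      · rfl
      rw [hStep n t ht]
      simp only [bet, Nat.add_sub_cancel]
      push_cast
      field_simp
      ring
    exact hgoal.derivWithin hud
  -- the sum of the derivatives vanishes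
  have hHasSum0 : ∀ t ∈ Ico (0:ℝ) T,
      HasSum (fun n : ℤ => derivWithin (e n) (Ico (0:ℝ) T) t) 0 := by
    intro t ht
    have hhs : HasSum (fun n : ℤ => derivWithin (e n) (Ico (0:ℝ) T) t)
        (∑' n : ℤ, derivWithin (e n) (Ico (0:ℝ) T) t) := hu2.tendsto_at ht
    suffices hzero : (∑' n : ℤ, derivWithin (e n) (Ico (0:ℝ) T) t) = 0 by
      rw [hzero] at hhs; exact hhs
    have hIcc : ∀ N : ℕ, (∑ n ∈ Finset.Icc (-(N:ℤ)) (N:ℤ), derivWithin (e n) (Ico (0:ℝ) T) t)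
        = tailSum (fun m => derivWithin (α m) (Ico (0:ℝ) T) t) ((N:ℤ)+1) * bet χ p α (N:ℤ) t
          - tailSum (fun m => derivWithin (α m) (Ico (0:ℝ) T) t) (-(N:ℤ)-1+1)
              * bet χ p α (-(N:ℤ)-1) t := by
      intro N
      have htel := tel_sum (fun k : ℤ =>
        tailSum (fun m => derivWithin (α m) (Ico (0:ℝ) T) t) (k+1) * bet χ p α k t)
        (-(N:ℤ)) (N:ℤ) (by omega)
      rw [← htel]
      apply Finset.sum_congr rfl
      intro n _
      rw [hEder n t ht]
      rw [show n - 1 + 1 = n from by ring]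
    have hc0 : Tendsto (fun k : ℤ =>
        tailSum (fun m => derivWithin (α m) (Ico (0:ℝ) T) t) (k+1) * bet χ p α k t)
        cofinite (𝓝 0) := by
      have habs : Tendsto (fun k : ℤ => |bet χ p α k t|) cofinite (𝓝 0) := by
        have := (continuous_abs.tendsto 0).comp (hβ0 t ht)
        simpa [Function.comp_def] using this
      have hbndtend : Tendsto (fun k : ℤ => Real.sqrt M * |bet χ p α k t|) cofinite (𝓝 0) := by
        have := habs.const_mul (Real.sqrt M)
        simpa using this
      apply squeeze_zero_norm ?_ hbndtend
      intro k
      rw [Real.norm_eq_abs, abs_mul]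
      exact mul_le_mul_of_nonneg_right (hSbd t ht (k+1)) (abs_nonneg _)
    have hm1 : Tendsto (fun N : ℕ => ((N:ℤ))) atTop (cofinite : Filter ℤ) := by
      rw [← Nat.cofinite_eq_atTop]
      exact Function.Injective.tendsto_cofinite (fun a b h => by omega)
    have hm2 : Tendsto (fun N : ℕ => (-(N:ℤ)-1)) atTop (cofinite : Filter ℤ) := by
      rw [← Nat.cofinite_eq_atTop]
      exact Function.Injective.tendsto_cofinite (fun a b h => by omega)
    have htel2 : Tendsto (fun N : ℕ =>
        tailSum (fun m => derivWithin (α m) (Ico (0:ℝ) T) t) ((N:ℤ)+1) * bet χ p α (N:ℤ) t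
          - tailSum (fun m => derivWithin (α m) (Ico (0:ℝ) T) t) (-(N:ℤ)-1+1)
              * bet χ p α (-(N:ℤ)-1) t) atTop (𝓝 (0 - 0)) :=
      (hc0.comp hm1).sub (hc0.comp hm2)
    have hsum_tendsto : Tendsto (fun N : ℕ =>
        ∑ n ∈ Finset.Icc (-(N:ℤ)) (N:ℤ), derivWithin (e n) (Ico (0:ℝ) T) t) atTop
        (𝓝 (∑' n : ℤ, derivWithin (e n) (Ico (0:ℝ) T) t)) :=
      hhs.comp icc_tendsto
    have := tendsto_nhds_unique hsum_tendsto (by rw [funext hIcc]; exact htel2)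
    simpa using this
  -- continuity of the energy derivative
  have hEcont : ∀ n : ℤ, ContinuousOn (derivWithin (e n) (Ico (0:ℝ) T)) (Ico (0:ℝ) T) := by
    intro n
    apply ContinuousOn.congr
      (((hScont (n+1)).mul (hβcont n)).sub ((hScont n).mul (hβcont (n-1))))
    intro u hu
    exact hEder n u hu
  have hintE : ∀ (n : ℤ) (t : ℝ), t ∈ Ico (0:ℝ) T →
      IntervalIntegrable (derivWithin (e n) (Ico (0:ℝ) T)) volume 0 t := by
    intro n t ht
    apply ContinuousOn.intervalIntegrable
    rw [uIcc_of_le ht.1]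
    exact (hEcont n).mono (fun x hx => ⟨hx.1, lt_of_le_of_lt hx.2 ht.2⟩)
  -- FTC for the local energies
  have hFTCe : ∀ n : ℤ, ∀ t ∈ Ico (0:ℝ) T,
      ∫ s in (0:ℝ)..t, derivWithin (e n) (Ico (0:ℝ) T) s = e n t - e n 0 := by
    intro n t ht
    have hsub : Icc (0:ℝ) t ⊆ Ico (0:ℝ) T := fun x hx => ⟨hx.1, lt_of_le_of_lt hx.2 ht.2⟩
    refine intervalIntegral.integral_eq_sub_of_hasDeriv_right_of_le ht.1
      (((hdiff n).continuousOn).mono hsub) ?_ (hintE n t ht)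
    intro x hx
    have hnh : Ico (0:ℝ) T ∈ 𝓝 x := Ico_mem_nhds hx.1 (hx.2.trans ht.2)
    have hxI : x ∈ Ico (0:ℝ) T := ⟨hx.1.le, hx.2.trans ht.2⟩
    exact (((hdiff n x hxI).hasDerivWithinAt).hasDerivAt hnh).hasDerivWithinAt
  -- conclusion
  intro t ht
  have hsum_t := hconv t ht
  have hsum_0 := hconv 0 h0T
  have hdiffsum : HasSum (fun n : ℤ => e n t - e n 0)
      ((∑' n : ℤ, e n t) - ∑' n : ℤ, e n 0) := hsum_t.hasSum.sub hsum_0.hasSum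
  have hpartial : ∀ F : Finset ℤ, (∑ n ∈ F, (e n t - e n 0))
      = ∫ s in (0:ℝ)..t, ∑ n ∈ F, derivWithin (e n) (Ico (0:ℝ) T) s := by
    intro F
    rw [intervalIntegral.integral_finset_sum (fun n _ => hintE n t ht)]
    apply Finset.sum_congr rfl
    intro n _
    rw [hFTCe n t ht]
  have hsubI : Icc (0:ℝ) t ⊆ Ico (0:ℝ) T := fun x hx => ⟨hx.1, lt_of_le_of_lt hx.2 ht.2⟩
  have hunif : TendstoUniformlyOn
      (fun (F : Finset ℤ) s => ∑ n ∈ F, derivWithin (e n) (Ico (0:ℝ) T) s)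
      (fun s => ∑' n : ℤ, derivWithin (e n) (Ico (0:ℝ) T) s) atTop (Icc (0:ℝ) t) :=
    (tendstoLocallyUniformlyOn_iff_tendstoUniformlyOn_of_compact isCompact_Icc).mp
      (hu2.mono hsubI)
  have hlim0 : Tendsto (fun F : Finset ℤ =>
      ∫ s in (0:ℝ)..t, ∑ n ∈ F, derivWithin (e n) (Ico (0:ℝ) T) s) atTop (𝓝 0) := by
    rw [NormedAddCommGroup.tendsto_nhds_zero]
    intro ε hε
    have ht1 : (0:ℝ) < t + 1 := by linarith [ht.1]
    have hε' : 0 < ε / (t+1) := by positivity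
    filter_upwards [(Metric.tendstoUniformlyOn_iff.mp hunif) (ε/(t+1)) hε'] with F hF
    have hb : ∀ s ∈ Ι (0:ℝ) t, ‖∑ n ∈ F, derivWithin (e n) (Ico (0:ℝ) T) s‖ ≤ ε/(t+1) := by
      intro s hs
      have hsIcc : s ∈ Icc (0:ℝ) t := by
        rw [uIoc_of_le ht.1] at hs
        exact ⟨hs.1.le, hs.2⟩
      have hds := hF s hsIcc
      rw [dist_eq_norm] at hds
      have hz : (∑' n : ℤ, derivWithin (e n) (Ico (0:ℝ) T) s) = 0 :=
        (hHasSum0 s (hsubI hsIcc)).tsum_eq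
      rw [hz, zero_sub, norm_neg] at hds
      exact hds.le
    have hnorm := intervalIntegral.norm_integral_le_of_norm_le_const hb
    have hfin : (ε/(t+1)) * |t - 0| < ε := by
      rw [sub_zero, abs_of_nonneg ht.1]
      have h1 : (ε/(t+1)) * t < (ε/(t+1)) * (t+1) := by
        apply mul_lt_mul_of_pos_left (by linarith) hε'
      have h2 : (ε/(t+1)) * (t+1) = ε := by field_simp
      linarith
    exact lt_of_le_of_lt hnorm hfin
  have h2 : Tendsto (fun F : Finset ℤ => ∑ n ∈ F, (e n t - e n 0)) atTop (𝓝 0) := by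
    rw [funext hpartial]
    exact hlim0
  have hfinal := tendsto_nhds_unique hdiffsum h2
  linarith
end

section
/- Let p ≥ 3 be an odd integer, χ_p > 0, T > 0, and let α = (α_n)_{n∈ℤ} and δ = (δ_n)_{n∈ℤ} be families of C² real functions on [0,T), each with finite energy, both solving the FPU equation α̈_n(t) = Δα_n(t) + χ_p·Δ(α_n(t)^p) on [0,T), and with the same initial data: α_n(0) = δ_n(0) and α̇_n(0) = δ̇_n(0) for all n ∈ ℤ. Set z_n(t) = Σ_{m≤n−1} (α_m(t) − δ_m(t)) and φ(t) = Σ_{n∈ℤ} [ ż_n(t)² + (z_{n+1}(t) − z_n(t))² ], and assume that the series defining φ(t) and the series of its term-wise time derivatives converge locally uniformly on [0,T). Then α_n(t) = δ_n(t) for all n ∈ ℤ and all t ∈ [0,T). -/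
open Set Filter

section FpuAux
open intervalIntegral MeasureTheory

private lemma fpu_poly_bound (f f' : ℝ → ℝ) (t D : ℝ) (k : ℕ) (ht : 0 ≤ t) (hD : 0 ≤ D)
    (hf : ContinuousOn f (Icc 0 t))
    (hd : ∀ x ∈ Ioo (0:ℝ) t, HasDerivAt f (f' x) x)
    (hint : IntervalIntegrable f' MeasureTheory.volume 0 t)
    (hb : ∀ x ∈ Ioc (0:ℝ) t, |f' x| ≤ D * x ^ k)
    (h0 : f 0 = 0) : |f t| ≤ D * t ^ (k + 1) / (k + 1) := by
  have hft : f t = ∫ x in (0:ℝ)..t, f' x := by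
    rw [integral_eq_sub_of_hasDeriv_right_of_le ht hf
      (fun x hx => (hd x hx).hasDerivWithinAt) hint, h0, sub_zero]
  have h2 : ‖∫ x in (0:ℝ)..t, f' x‖ ≤ |∫ x in (0:ℝ)..t, D * x ^ k| := by
    apply intervalIntegral.norm_integral_le_abs_of_norm_le _ (by
      exact (continuous_const.mul (continuous_pow k)).intervalIntegrable 0 t)
    filter_upwards [MeasureTheory.ae_restrict_mem measurableSet_uIoc] with x hx
    rw [uIoc_of_le ht] at hx
    exact hb x hx
  rw [hft, ← Real.norm_eq_abs]
  refine h2.trans ?_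
  rw [intervalIntegral.integral_const_mul, integral_pow,
    zero_pow (Nat.succ_ne_zero k), sub_zero, abs_of_nonneg (by positivity), mul_div_assoc]

private lemma fpu_core (T : ℝ) (hT : 0 < T) (w g2 : ℤ → ℝ → ℝ) (B K : ℝ) (hB : 0 ≤ B)
    (hK : 0 ≤ K)
    (hcont : ∀ n, ContinuousOn (w n) (Ico 0 T))
    (hcont1 : ∀ n, ContinuousOn (derivWithin (w n) (Ico 0 T)) (Ico 0 T))
    (hcont2 : ∀ n, ContinuousOn (g2 n) (Ico 0 T))
    (hd1 : ∀ n, ∀ x ∈ Ioo (0:ℝ) T, HasDerivAt (w n) (derivWithin (w n) (Ico 0 T) x) x)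
    (hd2 : ∀ n, ∀ x ∈ Ioo (0:ℝ) T, HasDerivAt (derivWithin (w n) (Ico 0 T)) (g2 n x) x)
    (h0 : ∀ n, w n 0 = 0) (h0' : ∀ n, derivWithin (w n) (Ico 0 T) 0 = 0)
    (hbound : ∀ n, ∀ x ∈ Ico (0:ℝ) T, ∀ A : ℝ, (∀ j, |w j x| ≤ A) → |g2 n x| ≤ K * A)
    (hBb : ∀ n, ∀ x ∈ Ico (0:ℝ) T, |w n x| ≤ B) :
    ∀ n, ∀ t ∈ Ico (0:ℝ) T, w n t = 0 := by
  have main : ∀ m : ℕ, ∀ n, ∀ t ∈ Ico (0:ℝ) T,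
      |w n t| ≤ B * (K * t ^ 2) ^ m / m.factorial := by
    intro m
    induction m with
    | zero => intro n t ht; simpa using hBb n t ht
    | succ m ih =>
      intro n t ht
      obtain ⟨ht0, htT⟩ := ht
      set D : ℝ := K * (B * K ^ m / m.factorial) with hD
      have hDpos : 0 ≤ D := by positivity
      have hg2b : ∀ x ∈ Ioc (0:ℝ) t, |g2 n x| ≤ D * x ^ (2 * m) := by
        intro x hx
        have hxI : x ∈ Ico (0:ℝ) T := ⟨hx.1.le, lt_of_le_of_lt hx.2 htT⟩
        have hA : ∀ j, |w j x| ≤ B * (K * x ^ 2) ^ m / m.factorial :=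
          fun j => ih j x hxI
        have := hbound n x hxI _ hA
        refine this.trans (le_of_eq ?_)
        rw [mul_pow, ← pow_mul]
        ring
      have hwd : ∀ y ∈ Ioc (0:ℝ) t, |derivWithin (w n) (Ico 0 T) y|
          ≤ (D / (2 * m + 1)) * y ^ (2 * m + 1) := by
        intro y hy
        have hyT : y < T := lt_of_le_of_lt hy.2 htT
        have hIcc : Icc (0:ℝ) y ⊆ Ico 0 T := fun x hx => ⟨hx.1, lt_of_le_of_lt hx.2 hyT⟩
        have h := fpu_poly_bound (derivWithin (w n) (Ico 0 T)) (g2 n) y D (2 * m)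
          hy.1.le hDpos ((hcont1 n).mono hIcc)
          (fun x hx => hd2 n x ⟨hx.1, lt_of_lt_of_le hx.2 hyT.le⟩)
          (((hcont2 n).mono hIcc).intervalIntegrable_of_Icc hy.1.le)
          (fun x hx => hg2b x ⟨hx.1, hx.2.trans hy.2⟩) (h0' n)
        refine h.trans (le_of_eq ?_)
        push_cast
        ring
      have hIcc : Icc (0:ℝ) t ⊆ Ico 0 T := fun x hx => ⟨hx.1, lt_of_le_of_lt hx.2 htT⟩
      have h := fpu_poly_bound (w n) (derivWithin (w n) (Ico 0 T)) t (D / (2 * m + 1))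
        (2 * m + 1) ht0 (by positivity) ((hcont n).mono hIcc)
        (fun x hx => hd1 n x ⟨hx.1, lt_of_lt_of_le hx.2 htT.le⟩)
        (((hcont1 n).mono hIcc).intervalIntegrable_of_Icc ht0)
        hwd (h0 n)
      push_cast at h
      refine h.trans ?_
      have hq : (0:ℝ) ≤ B * K ^ (m + 1) * t ^ (2 * m + 2) := by positivity
      have e1 : D / (2 * m + 1) * t ^ (2 * m + 1 + 1) / (2 * m + 1 + 1)
          = (B * K ^ (m + 1) * t ^ (2 * m + 2)) /
            ((m.factorial : ℝ) * ((2 * m + 1) * (2 * m + 2))) := by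
        push_cast
        rw [hD]
        field_simp
        ring
      have e2 : B * (K * t ^ 2) ^ (m + 1) / (m + 1).factorial
          = (B * K ^ (m + 1) * t ^ (2 * m + 2)) / ((m + 1).factorial : ℝ) := by
        rw [mul_pow, ← pow_mul]
        ring_nf
      rw [e1, e2]
      have hlt : (0:ℝ) < (m+1).factorial := by positivity
      have hle : (((m+1).factorial : ℕ) : ℝ)
          ≤ (m.factorial : ℝ) * ((2 * m + 1) * (2 * m + 2)) := by
        rw [Nat.factorial_succ]
        push_cast
        have hf0 : (0:ℝ) ≤ m.factorial := Nat.cast_nonneg _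
        have hm0 : (0:ℝ) ≤ m := Nat.cast_nonneg _
        nlinarith [mul_nonneg hf0 hm0, mul_nonneg (mul_nonneg hf0 hm0) hm0]
      exact div_le_div_of_nonneg_left hq hlt hle
  intro n t ht
  have hlim : Filter.Tendsto (fun m : ℕ => B * (K * t ^ 2) ^ m / m.factorial)
      Filter.atTop (nhds 0) := by
    have := (FloorSemiring.tendsto_pow_div_factorial_atTop (K := ℝ) (K * t ^ 2)).const_mul B
    rw [mul_zero] at this
    simpa [mul_div_assoc] using this
  have h0le : |w n t| ≤ 0 := ge_of_tendsto' hlim (fun m => main m n t ht)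
  exact abs_eq_zero.mp (le_antisymm h0le (abs_nonneg _))

private lemma fpu_pow_diff (p : ℕ) (a b C : ℝ) (hC : 0 ≤ C) (ha : |a| ≤ C) (hb : |b| ≤ C) :
    |a ^ p - b ^ p| ≤ p * C ^ (p - 1) * |a - b| := by
  rw [← geom_sum₂_mul a b p, abs_mul]
  apply mul_le_mul_of_nonneg_right _ (abs_nonneg _)
  calc |∑ i ∈ Finset.range p, a ^ i * b ^ (p - 1 - i)|
      ≤ ∑ i ∈ Finset.range p, |a ^ i * b ^ (p - 1 - i)| := Finset.abs_sum_le_sum_abs _ _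
    _ ≤ ∑ _i ∈ Finset.range p, C ^ (p - 1) := by
        apply Finset.sum_le_sum
        intro i hi
        rw [Finset.mem_range] at hi
        rw [abs_mul, abs_pow, abs_pow]
        have h1 : |a| ^ i * |b| ^ (p - 1 - i) ≤ C ^ i * C ^ (p - 1 - i) :=
          mul_le_mul (pow_le_pow_left₀ (abs_nonneg _) ha i)
            (pow_le_pow_left₀ (abs_nonneg _) hb _) (by positivity) (by positivity)
        refine h1.trans (le_of_eq ?_)
        rw [← pow_add]
        congr 1
        omega
    _ = p * C ^ (p - 1) := by
        rw [Finset.sum_const, Finset.card_range, nsmul_eq_mul]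

private lemma fpu_sq_bound (α : ℤ → ℝ → ℝ) (T : ℝ) (hE : FiniteEnergyOn α (Ico 0 T) T) :
    ∃ C : ℝ, 0 ≤ C ∧ ∀ n : ℤ, ∀ t ∈ Ico (0:ℝ) T, |α n t| ≤ C := by
  obtain ⟨-, M, hM⟩ := hE
  refine ⟨Real.sqrt M, Real.sqrt_nonneg M, fun n t ht => ?_⟩
  obtain ⟨h1, h2, h3⟩ := hM t ht
  have hfirst : 0 ≤ ∑' n : ℤ, (tailSum (fun m => derivWithin (α m) (Ico 0 T) t) n) ^ 2 :=
    tsum_nonneg (fun n => sq_nonneg _)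
  have hsq : (α n t) ^ 2 ≤ M := by
    have := Summable.le_tsum h2 n (fun j _ => sq_nonneg _)
    linarith
  calc |α n t| = Real.sqrt ((α n t) ^ 2) := (Real.sqrt_sq_eq_abs _).symm
    _ ≤ Real.sqrt M := Real.sqrt_le_sqrt hsq

end FpuAux

/-- uniqueness of finite-energy solutions of the FPU lattice: two solutions
with the same initial data coincide, assuming the series defining
`φ(t) = Σ_n [ż_n² + (z_{n+1}-z_n)²]` (with `z_n = Σ_{m≤n-1}(α_m - δ_m)`) and the series of
its term-wise time derivatives converge locally uniformly on `[0,T)`. -/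
theorem fpu_uniqueness (p : ℕ) (hodd : Odd p) (hp : 3 ≤ p)
    (χ T : ℝ) (hχ : 0 < χ) (hT : 0 < T)
    (α δ : ℤ → ℝ → ℝ)
    (hC2α : ∀ n : ℤ, ContDiffOn ℝ 2 (α n) (Ico 0 T))
    (hC2δ : ∀ n : ℤ, ContDiffOn ℝ 2 (δ n) (Ico 0 T))
    (hEα : FiniteEnergyOn α (Ico 0 T) T)
    (hEδ : FiniteEnergyOn δ (Ico 0 T) T)
    (hsolα : SolvesFPU p χ α (Ico 0 T))
    (hsolδ : SolvesFPU p χ δ (Ico 0 T))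
    (hic1 : ∀ n : ℤ, α n 0 = δ n 0)
    (hic2 : ∀ n : ℤ, derivWithin (α n) (Ico 0 T) 0 = derivWithin (δ n) (Ico 0 T) 0)
    (hzsum : ∀ n : ℤ, ∀ t ∈ Ico (0 : ℝ) T,
      Summable (fun m : {m : ℤ // m ≤ n - 1} => α m.1 t - δ m.1 t))
    (z : ℤ → ℝ → ℝ)
    (hz : ∀ (n : ℤ) (t : ℝ), z n t = ∑' m : {m : ℤ // m ≤ n - 1}, (α m.1 t - δ m.1 t))
    (g : ℤ → ℝ → ℝ)
    (hg : ∀ (n : ℤ) (t : ℝ),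
      g n t = (derivWithin (z n) (Ico 0 T) t) ^ 2 + (z (n + 1) t - z n t) ^ 2)
    (hconv : ∀ t ∈ Ico (0 : ℝ) T, Summable (fun n : ℤ => g n t))
    (hdiff : ∀ n : ℤ, DifferentiableOn ℝ (g n) (Ico 0 T))
    (hu1 : TendstoLocallyUniformlyOn (fun (s : Finset ℤ) (t : ℝ) => ∑ n ∈ s, g n t)
      (fun t => ∑' n : ℤ, g n t) atTop (Ico 0 T))
    (hu2 : TendstoLocallyUniformlyOn
      (fun (s : Finset ℤ) (t : ℝ) => ∑ n ∈ s, derivWithin (g n) (Ico 0 T) t)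
      (fun t => ∑' n : ℤ, derivWithin (g n) (Ico 0 T) t) atTop (Ico 0 T)) :
    ∀ n : ℤ, ∀ t ∈ Ico (0 : ℝ) T, α n t = δ n t := by
  have hUD : UniqueDiffOn ℝ (Ico (0:ℝ) T) := uniqueDiffOn_Ico 0 T
  obtain ⟨Cα, hCα0, hCα⟩ := fpu_sq_bound α T hEα
  obtain ⟨Cδ, hCδ0, hCδ⟩ := fpu_sq_bound δ T hEδ
  set C : ℝ := max Cα Cδ with hCdef
  have hC0 : 0 ≤ C := hCα0.trans (le_max_left _ _)
  have hαb : ∀ n, ∀ t ∈ Ico (0:ℝ) T, |α n t| ≤ C :=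
    fun n t ht => (hCα n t ht).trans (le_max_left _ _)
  have hδb : ∀ n, ∀ t ∈ Ico (0:ℝ) T, |δ n t| ≤ C :=
    fun n t ht => (hCδ n t ht).trans (le_max_right _ _)
  set w : ℤ → ℝ → ℝ := fun n t => α n t - δ n t with hwdef
  set g2 : ℤ → ℝ → ℝ := fun n t =>
    (lap (fun m => α m t) n + χ * lap (fun m => (α m t) ^ p) n)
    - (lap (fun m => δ m t) n + χ * lap (fun m => (δ m t) ^ p) n) with hg2def
  set B : ℝ := 2 * C with hBdef
  set K : ℝ := 4 + 4 * (χ * (p * C ^ (p - 1))) with hKdef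
  have hB0 : 0 ≤ B := by positivity
  have hK0 : 0 ≤ K := by positivity
  have hw2 : ∀ n, ContDiffOn ℝ 2 (w n) (Ico (0:ℝ) T) := fun n => (hC2α n).sub (hC2δ n)
  have hdw : ∀ n, DifferentiableOn ℝ (w n) (Ico (0:ℝ) T) :=
    fun n => (hw2 n).differentiableOn two_ne_zero
  have hw1C : ∀ n, ContDiffOn ℝ 1 (derivWithin (w n) (Ico (0:ℝ) T)) (Ico (0:ℝ) T) :=
    fun n => (hw2 n).derivWithin hUD (by norm_num)
  have hdw1 : ∀ n, DifferentiableOn ℝ (derivWithin (w n) (Ico (0:ℝ) T)) (Ico (0:ℝ) T) :=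
    fun n => (hw1C n).differentiableOn one_ne_zero
  have hdsub : ∀ n, ∀ t ∈ Ico (0:ℝ) T, derivWithin (w n) (Ico (0:ℝ) T) t
      = derivWithin (α n) (Ico (0:ℝ) T) t - derivWithin (δ n) (Ico (0:ℝ) T) t :=
    fun n t ht => derivWithin_sub
      ((hC2α n).differentiableOn two_ne_zero t ht)
      ((hC2δ n).differentiableOn two_ne_zero t ht)
  have hsec : ∀ n, ∀ t ∈ Ico (0:ℝ) T,
      derivWithin (derivWithin (w n) (Ico (0:ℝ) T)) (Ico (0:ℝ) T) t = g2 n t := by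
    intro n t ht
    have e1 : derivWithin (derivWithin (w n) (Ico (0:ℝ) T)) (Ico (0:ℝ) T) t
        = derivWithin (fun y => derivWithin (α n) (Ico (0:ℝ) T) y
            - derivWithin (δ n) (Ico (0:ℝ) T) y) (Ico (0:ℝ) T) t :=
      derivWithin_congr (fun y hy => hdsub n y hy) (hdsub n t ht)
    rw [e1, derivWithin_fun_sub
      (((hC2α n).derivWithin hUD (by norm_num)).differentiableOn one_ne_zero t ht)
      (((hC2δ n).derivWithin hUD (by norm_num)).differentiableOn one_ne_zero t ht),
      hsolα n t ht, hsolδ n t ht]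
  have hcontw : ∀ n, ContinuousOn (w n) (Ico (0:ℝ) T) := fun n => (hdw n).continuousOn
  have hcont1 : ∀ n, ContinuousOn (derivWithin (w n) (Ico (0:ℝ) T)) (Ico (0:ℝ) T) :=
    fun n => (hw1C n).continuousOn
  have hconts : ∀ n, ContinuousOn (g2 n) (Ico (0:ℝ) T) := by
    intro n
    have hca : ∀ m : ℤ, ContinuousOn (fun t => α m t) (Ico (0:ℝ) T) :=
      fun m => (hC2α m).continuousOn
    have hcd : ∀ m : ℤ, ContinuousOn (fun t => δ m t) (Ico (0:ℝ) T) :=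
      fun m => (hC2δ m).continuousOn
    simp only [hg2def, lap]
    exact ((((hca (n+1)).add (hca (n-1))).sub (continuousOn_const.mul (hca n))).add
      (continuousOn_const.mul ((((hca (n+1)).pow p).add ((hca (n-1)).pow p)).sub
        (continuousOn_const.mul ((hca n).pow p))))).sub
      ((((hcd (n+1)).add (hcd (n-1))).sub (continuousOn_const.mul (hcd n))).add
      (continuousOn_const.mul ((((hcd (n+1)).pow p).add ((hcd (n-1)).pow p)).sub
        (continuousOn_const.mul ((hcd n).pow p)))))
  have hd1 : ∀ n, ∀ x ∈ Ioo (0:ℝ) T,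
      HasDerivAt (w n) (derivWithin (w n) (Ico (0:ℝ) T) x) x := by
    intro n x hx
    exact ((hdw n) x ⟨hx.1.le, hx.2⟩).hasDerivWithinAt.hasDerivAt (Ico_mem_nhds hx.1 hx.2)
  have hd2 : ∀ n, ∀ x ∈ Ioo (0:ℝ) T,
      HasDerivAt (derivWithin (w n) (Ico (0:ℝ) T)) (g2 n x) x := by
    intro n x hx
    have hxs : x ∈ Ico (0:ℝ) T := ⟨hx.1.le, hx.2⟩
    have h := ((hdw1 n) x hxs).hasDerivWithinAt.hasDerivAt (Ico_mem_nhds hx.1 hx.2)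
    rwa [hsec n x hxs] at h
  have h0 : ∀ n, w n 0 = 0 := fun n => sub_eq_zero.mpr (hic1 n)
  have h0' : ∀ n, derivWithin (w n) (Ico (0:ℝ) T) 0 = 0 := by
    intro n
    rw [hdsub n 0 ⟨le_rfl, hT⟩, hic2 n, sub_self]
  have hBb : ∀ n, ∀ x ∈ Ico (0:ℝ) T, |w n x| ≤ B := by
    intro n x hx
    have := abs_sub (α n x) (δ n x)
    have h1 := hαb n x hx
    have h2 := hδb n x hx
    calc |w n x| ≤ |α n x| + |δ n x| := abs_sub _ _
      _ ≤ B := by rw [hBdef]; linarith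
  have hbound : ∀ n, ∀ x ∈ Ico (0:ℝ) T, ∀ A : ℝ,
      (∀ j, |w j x| ≤ A) → |g2 n x| ≤ K * A := by
    intro n x hx A hA
    have hA0 : 0 ≤ A := (abs_nonneg _).trans (hA n)
    set Q : ℝ := p * C ^ (p - 1) * A with hQ
    have hP : ∀ j : ℤ, |(α j x) ^ p - (δ j x) ^ p| ≤ Q := by
      intro j
      refine (fpu_pow_diff p (α j x) (δ j x) C hC0 (hαb j x hx) (hδb j x hx)).trans ?_
      rw [hQ]
      exact mul_le_mul_of_nonneg_left (hA j) (by positivity)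
    have hgval : g2 n x = (w (n+1) x + w (n-1) x - 2 * w n x)
        + (χ * ((α (n+1) x) ^ p - (δ (n+1) x) ^ p)
          + χ * ((α (n-1) x) ^ p - (δ (n-1) x) ^ p)
          - 2 * (χ * ((α n x) ^ p - (δ n x) ^ p))) := by
      simp only [hg2def, hwdef, lap]
      ring
    have hw1 := abs_le.mp (hA (n+1))
    have hw2' := abs_le.mp (hA (n-1))
    have hw3 := abs_le.mp (hA n)
    have hm1 : χ * ((α (n+1) x) ^ p - (δ (n+1) x) ^ p) ≤ χ * Q :=
      mul_le_mul_of_nonneg_left (abs_le.mp (hP (n+1))).2 hχ.le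
    have hm1' : -(χ * Q) ≤ χ * ((α (n+1) x) ^ p - (δ (n+1) x) ^ p) := by
      have := mul_le_mul_of_nonneg_left (abs_le.mp (hP (n+1))).1 hχ.le
      linarith [this]
    have hm2 : χ * ((α (n-1) x) ^ p - (δ (n-1) x) ^ p) ≤ χ * Q :=
      mul_le_mul_of_nonneg_left (abs_le.mp (hP (n-1))).2 hχ.le
    have hm2' : -(χ * Q) ≤ χ * ((α (n-1) x) ^ p - (δ (n-1) x) ^ p) := by
      have := mul_le_mul_of_nonneg_left (abs_le.mp (hP (n-1))).1 hχ.le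
      linarith [this]
    have hm3 : χ * ((α n x) ^ p - (δ n x) ^ p) ≤ χ * Q :=
      mul_le_mul_of_nonneg_left (abs_le.mp (hP n)).2 hχ.le
    have hm3' : -(χ * Q) ≤ χ * ((α n x) ^ p - (δ n x) ^ p) := by
      have := mul_le_mul_of_nonneg_left (abs_le.mp (hP n)).1 hχ.le
      linarith [this]
    have hKA : K * A = 4 * A + 4 * (χ * Q) := by
      rw [hKdef, hQ]
      ring
    rw [hgval, abs_le]
    constructor <;> linarith [hKA]
  have hzero := fpu_core T hT w g2 B K hB0 hK0 hcontw hcont1 hconts hd1 hd2 h0 h0' hbound hBb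
  intro n t ht
  have h := hzero n t ht
  exact sub_eq_zero.mp h
end
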